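/- arXiv:1306.1270 — 9 statements merged into one kernel-verified Lean document; each statement's English description precedes it below -/
import Mathlib

section
/- Let M be a countable monoid acting in a Borel way on a Polish space X so that the induced relation x ≼ y ⟺ (∃m∈M) x = m·y is a quasi-order, and let {U_i}_{i∈ℕ} be a sequence of Borel subsets of X separating points. Then the map φ sending x to φ_x ∈ (2^ℕ)^M defined by φ_x(s)(i) = 1 ⟺ s·x ∈ U_i is an injective Borel map satisfying t·φ_x = φ_{t·x} for all t ∈ M, and hence is a Borel reduction of ≼ to the canonical shift quasi-order on (2^ℕ)^M. -/
open Classical in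

/-- If a countable monoid `M` acts in a Borel way on a Polish space `X` inducing the
quasi-order `x ≼ y ↔ ∃ m, x = m • x`, and `(U i)` is a sequence of Borel sets separating
points, then `φ x := fun s i => (s • x ∈ U i)` is an injective Borel map which is
`M`-equivariant for the shift action on `(2^ℕ)^M`, and is a Borel reduction of `≼` to the
canonical shift quasi-order. -/
theorem reduction_to_shift_quasiOrder
    (X : Type) [TopologicalSpace X] [PolishSpace X]
    [MeasurableSpace X] [BorelSpace X]
    (M : Type) [Monoid M] [Countable M] [MeasurableSpace M] [MeasurableSingletonClass M]
    (act : M → X → X)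
    (hmeas : ∀ m : M, Measurable (act m))
    (hone : ∀ x : X, act 1 x = x)
    (hmul : ∀ (m n : M) (x : X), act m (act n x) = act (m * n) x)
    (U : ℕ → Set X)
    (hU : ∀ i, MeasurableSet (U i))
    (hsep : ∀ x y : X, x ≠ y → ∃ i, (x ∈ U i ↔ y ∉ U i)) :
    let φ : X → (M → (ℕ → Bool)) := fun x s i => decide (act s x ∈ U i)
    let shift : M → (M → (ℕ → Bool)) → (M → (ℕ → Bool)) := fun m f s => f (s * m)
    Measurable φ ∧
    Function.Injective φ ∧
    (∀ (t : M) (x : X), shift t (φ x) = φ (act t x)) ∧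
    (∀ x y : X, (∃ m : M, x = act m y) ↔ ∃ m : M, φ x = shift m (φ y)) := by

  intro φ shift
  have hinj : Function.Injective φ := by
    intro x y h
    by_contra hne
    obtain ⟨i, hi⟩ := hsep x y hne
    have hx := congrFun (congrFun h 1) i
    simp only [φ, hone, decide_eq_decide] at hx
    tauto
  have hequiv : ∀ (t : M) (x : X), shift t (φ x) = φ (act t x) := by
    intro t x
    funext s i
    simp only [φ, shift, hmul]
  refine ⟨?_, hinj, hequiv, ?_⟩
  · apply measurable_pi_lambda
    intro s
    apply measurable_pi_lambda
    intro i
    apply measurable_to_bool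
    have : (fun x => decide (act s x ∈ U i)) ⁻¹' {true} = (act s) ⁻¹' (U i) := by
      ext x; simp
    rw [this]
    exact (hmeas s) (hU i)
  · intro x y
    constructor
    · rintro ⟨m, rfl⟩
      exact ⟨m, (hequiv m y).symm⟩
    · rintro ⟨m, hm⟩
      rw [hequiv m y] at hm
      exact ⟨m, hinj hm⟩
end

section
/- The shift quasi-order of the free monoid on countably many generators acting on 2^{M_ω} Borel reduces to the shift quasi-order of the free monoid on two generators acting on 2^{M_2}: the map p ↦ p* defined by p*(h) = p(h) if L(h) = 0, p*(h) = 1 if L(h) = 1, and p*(h) = 0 if L(h) > 1, is a Borel reduction. -/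
open Classical

/-- The submonoid of `M₂` (`FreeMonoid Bool`, `a = false`, `b = true`) that is the image
of the free monoid `M_ω` on generators `x_n` under `x_n ↦ a b^n` (`n ≥ 1`). -/
def Momega : Submonoid (FreeMonoid Bool) :=
  Submonoid.closure
    {w | ∃ n : ℕ, 1 ≤ n ∧ w = FreeMonoid.ofList (false :: List.replicate n true)}

/-- `L h` is the length of `h'` in the canonical factorization `h = h' * g`, where `g` is
the longest suffix of `h` lying in `M_ω`. -/
noncomputable def Llen (h : FreeMonoid Bool) : ℕ :=
  sInf {n : ℕ | FreeMonoid.ofList (h.toList.drop n) ∈ Momega}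

/-- The map `p ↦ p*`, where `p*(h) = p(h)` if `L(h) = 0` (i.e. `h ∈ M_ω`),
`p*(h) = 1` if `L(h) = 1`, and `p*(h) = 0` if `L(h) > 1`. -/
noncomputable def pStar (p : Momega → Bool) (h : FreeMonoid Bool) : Bool :=
  if hm : h ∈ Momega then p ⟨h, hm⟩ else (if Llen h = 1 then true else false)

/-- Lists which are concatenations of blocks `false :: true^n`, `n ≥ 1`. -/
inductive IsOm : List Bool → Prop
  | nil : IsOm []
  | cons (n : ℕ) (hn : 1 ≤ n) (w : List Bool) (hw : IsOm w) :
      IsOm (false :: (List.replicate n true ++ w))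

lemma IsOm.cases' {l : List Bool} (h : IsOm l) :
    l = [] ∨ ∃ n w, 1 ≤ n ∧ IsOm w ∧ l = false :: (List.replicate n true ++ w) := by
  cases h with
  | nil => exact Or.inl rfl
  | cons n hn w hw => exact Or.inr ⟨n, w, hn, hw, rfl⟩

lemma IsOm.head' {l : List Bool} (h : IsOm l) : l = [] ∨ ∃ r, l = false :: r := by
  rcases h.cases' with h | ⟨n, w, _, _, rfl⟩
  · exact Or.inl h
  · exact Or.inr ⟨_, rfl⟩

lemma IsOm.append {u v : List Bool} (hu : IsOm u) (hv : IsOm v) : IsOm (u ++ v) := by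
  induction hu with
  | nil => simpa using hv
  | cons n hn w hw ih =>
    have := IsOm.cons n hn (w ++ v) ih
    simpa [List.append_assoc] using this

lemma mem_Momega_iff (h : FreeMonoid Bool) : h ∈ Momega ↔ IsOm h.toList := by
  constructor
  · intro hm
    refine Submonoid.closure_induction ?_ ?_ ?_ hm
    · rintro x ⟨n, hn, rfl⟩
      simpa [FreeMonoid.toList_ofList] using IsOm.cons n hn [] IsOm.nil
    · simpa [FreeMonoid.toList_one] using IsOm.nil
    · intro x y _ _ hx hy
      simpa [FreeMonoid.toList_mul] using hx.append hy
  · intro hI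
    have : ∀ l : List Bool, IsOm l → FreeMonoid.ofList l ∈ Momega := by
      intro l hl
      induction hl with
      | nil => simpa [FreeMonoid.ofList_nil] using Momega.one_mem
      | cons n hn w hw ih =>
        have h1 : FreeMonoid.ofList (false :: List.replicate n true) ∈ Momega :=
          Submonoid.subset_closure ⟨n, hn, rfl⟩
        have : FreeMonoid.ofList (false :: (List.replicate n true ++ w)) =
            FreeMonoid.ofList (false :: List.replicate n true) * FreeMonoid.ofList w := by
          rw [← FreeMonoid.ofList_append]; simp
        rw [this]
        exact Momega.mul_mem h1 ih
    have := this h.toList hI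
    rwa [FreeMonoid.ofList_toList] at this

lemma isOm_cancel_aux :
    ∀ (k : ℕ) (h m : List Bool), h.length ≤ k → IsOm m → IsOm (h ++ m) → IsOm h := by
  intro k
  induction k with
  | zero =>
    intro h m hl _ _
    have : h = [] := List.eq_nil_of_length_eq_zero (Nat.le_zero.mp hl)
    simp [this, IsOm.nil]
  | succ k ih =>
    intro h m hl hm hhm
    match h with
    | [] => exact IsOm.nil
    | h0 :: t =>
      rcases hhm.cases' with hnil | ⟨n, w, hn, hw, heq⟩
      · simp at hnil
      · have heq' : h0 :: (t ++ m) = false :: (List.replicate n true ++ w) := by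
          simpa using heq
        have h0f : h0 = false := (List.cons.injEq _ _ _ _ ▸ heq').1
        have htm : t ++ m = List.replicate n true ++ w := (List.cons.injEq _ _ _ _ ▸ heq').2
        rcases List.append_eq_append_iff.mp htm with ⟨a', ha1, ha2⟩ | ⟨c', hc1, hc2⟩
        · -- replicate n true = t ++ a', m = a' ++ w
          match a' with
          | [] =>
            have ht : t = List.replicate n true := by simpa using ha1.symm
            subst h0f
            rw [ht]
            have := IsOm.cons n hn [] IsOm.nil
            simpa using this
          | x :: a'' =>
            exfalso
            have hx : x = true := by
              have : x ∈ List.replicate n true := by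
                rw [ha1]; exact List.mem_append.mpr (Or.inr List.mem_cons_self)
              exact List.eq_of_mem_replicate this
            rcases hm.head' with hme | ⟨r, hr⟩
            · rw [hme] at ha2; simp at ha2
            · rw [hr] at ha2
              have : false = x := (List.cons.injEq _ _ _ _ ▸ ha2).1
              simp [hx] at this
        · -- t = replicate n true ++ c', w = c' ++ m
          have hlen : c'.length ≤ k := by
            have : t.length ≤ k := by simpa using Nat.lt_succ_iff.mp (Nat.lt_of_lt_of_le (by simp) hl)
            have h2 : c'.length ≤ t.length := by
              rw [hc1]; simp
            omega
          have hc'om : IsOm c' := ih c' m hlen hm (hc2 ▸ hw)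
          subst h0f
          rw [hc1]
          exact IsOm.cons n hn c' hc'om

lemma isOm_cancel {h m : List Bool} (hm : IsOm m) (hhm : IsOm (h ++ m)) : IsOm h :=
  isOm_cancel_aux h.length h m le_rfl hm hhm

lemma mem_Momega_mul_iff {h m : FreeMonoid Bool} (hm : m ∈ Momega) :
    h * m ∈ Momega ↔ h ∈ Momega := by
  rw [mem_Momega_iff, mem_Momega_iff]
  rw [mem_Momega_iff] at hm
  constructor
  · intro hh
    exact isOm_cancel hm (by simpa [FreeMonoid.toList_mul] using hh)
  · intro hh
    simpa [FreeMonoid.toList_mul] using hh.append hm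

lemma Llen_set_nonempty (h : FreeMonoid Bool) :
    h.toList.length ∈ {n : ℕ | FreeMonoid.ofList (h.toList.drop n) ∈ Momega} := by
  simp only [Set.mem_setOf_eq, List.drop_length, FreeMonoid.ofList_nil]
  exact Momega.one_mem

lemma Llen_le_length (h : FreeMonoid Bool) : Llen h ≤ h.toList.length :=
  Nat.sInf_le (Llen_set_nonempty h)

lemma Llen_mem (h : FreeMonoid Bool) :
    FreeMonoid.ofList (h.toList.drop (Llen h)) ∈ Momega :=
  Nat.sInf_mem ⟨h.toList.length, Llen_set_nonempty h⟩

lemma Llen_mul {h m : FreeMonoid Bool} (hm : m ∈ Momega) : Llen (h * m) = Llen h := by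
  have hdrop : ∀ n, n ≤ h.toList.length →
      (h * m).toList.drop n = h.toList.drop n ++ m.toList := by
    intro n hn
    rw [FreeMonoid.toList_mul, List.drop_append_of_le_length hn]
  have le1 : Llen (h * m) ≤ Llen h := by
    apply Nat.sInf_le
    simp only [Set.mem_setOf_eq]
    rw [hdrop _ (Llen_le_length h), FreeMonoid.ofList_append]
    exact Momega.mul_mem (Llen_mem h) (by simpa [FreeMonoid.ofList_toList] using hm)
  have le2 : Llen h ≤ Llen (h * m) := by
    apply Nat.sInf_le
    simp only [Set.mem_setOf_eq]
    have hk : Llen (h * m) ≤ h.toList.length := le_trans le1 (Llen_le_length h)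
    have := Llen_mem (h * m)
    rw [hdrop _ hk, FreeMonoid.ofList_append] at this
    rw [← mem_Momega_mul_iff (m := FreeMonoid.ofList m.toList)
      (by simpa [FreeMonoid.ofList_toList] using hm)]
    exact this
  exact le_antisymm le1 le2

lemma not_mem_of_head_true {h : FreeMonoid Bool} {r : List Bool}
    (hh : h.toList = true :: r) : h ∉ Momega := by
  intro hmem
  rw [mem_Momega_iff, hh] at hmem
  rcases hmem.head' with h1 | ⟨r', h1⟩ <;> simp at h1

lemma Llen_b_mul (m : FreeMonoid Bool) :
    Llen (FreeMonoid.of true * m) = 1 ↔ m ∈ Momega := by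
  have htl : (FreeMonoid.of true * m).toList = true :: m.toList := by
    rw [FreeMonoid.toList_mul]; rfl
  constructor
  · intro h1
    have hmem := Llen_mem (FreeMonoid.of true * m)
    rw [h1, htl] at hmem
    simpa [FreeMonoid.ofList_toList] using hmem
  · intro hm
    apply le_antisymm
    · apply Nat.sInf_le
      simp only [Set.mem_setOf_eq, htl, List.drop_one]
      simpa [FreeMonoid.ofList_toList] using hm
    · rw [Nat.one_le_iff_ne_zero]
      intro h0
      have hmem := Llen_mem (FreeMonoid.of true * m)
      rw [h0, htl] at hmem
      exact not_mem_of_head_true (r := m.toList)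
        (h := FreeMonoid.ofList (true :: m.toList)) rfl (by simpa using hmem)

/-- `p ↦ p*` is a Borel reduction from the shift quasi-order of `M_ω` acting on
`2^{M_ω}` to the shift quasi-order of `M₂` acting on `2^{M₂}`. -/
theorem pStar_borel_reduction :
    Measurable (fun p : Momega → Bool => pStar p) ∧
    ∀ p q : Momega → Bool,
      (∃ m : Momega, ∀ s : Momega, p s = q (s * m)) ↔
      (∃ m : FreeMonoid Bool, ∀ h : FreeMonoid Bool, pStar p h = pStar q (h * m)) := by
  constructor
  · apply measurable_pi_lambda
    intro h
    by_cases hm : h ∈ Momega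
    · simp only [pStar, dif_pos hm]
      exact measurable_pi_apply _
    · simp only [pStar, dif_neg hm]
      exact measurable_const
  · intro p q
    constructor
    · rintro ⟨m, hpq⟩
      refine ⟨(m : FreeMonoid Bool), fun h => ?_⟩
      by_cases hh : h ∈ Momega
      · have hhm : h * (m : FreeMonoid Bool) ∈ Momega := Momega.mul_mem hh m.2
        rw [pStar, pStar, dif_pos hh, dif_pos hhm]
        have := hpq ⟨h, hh⟩
        convert this using 2
        rfl
      · have hhm : h * (m : FreeMonoid Bool) ∉ Momega := by
          rw [mem_Momega_mul_iff m.2]; exact hh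
        rw [pStar, pStar, dif_neg hh, dif_neg hhm, Llen_mul m.2]
    · rintro ⟨m, hpq⟩
      have hb : FreeMonoid.of true ∉ Momega :=
        not_mem_of_head_true (r := []) rfl
      have hbm : FreeMonoid.of true * m ∉ Momega := by
        apply not_mem_of_head_true (r := m.toList)
        rw [FreeMonoid.toList_mul]; rfl
      have hLb : Llen (FreeMonoid.of true) = 1 := by
        have := (Llen_b_mul 1).mpr Momega.one_mem
        simpa using this
      have hkey := hpq (FreeMonoid.of true)
      rw [pStar, pStar, dif_neg hb, dif_neg hbm, hLb, if_pos rfl] at hkey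
      have hL1 : Llen (FreeMonoid.of true * m) = 1 := by
        by_contra hne
        rw [if_neg hne] at hkey
        exact Bool.true_eq_false.mp hkey
      have hmem : m ∈ Momega := (Llen_b_mul m).mp hL1
      refine ⟨⟨m, hmem⟩, fun s => ?_⟩
      have := hpq (s : FreeMonoid Bool)
      rw [pStar, pStar, dif_pos s.2, dif_pos (Momega.mul_mem s.2 hmem)] at this
      convert this using 2
      rfl
end

section
/- For each subset A of the free monoid M_2 on {a,b}, let T_A be the tree on {0,1,2} consisting of all sequences in 2^{<ℕ} together with all sequences ŵ⌢2 for w ∈ A (where ŵ is the binary sequence corresponding to w). Then for A, B ⊆ M_2: there exists m ∈ M_2 with mA = B ∩ mM_2 if and only if there exists a finite sequence u with T_A = (T_B)_u, where (T_B)_u = {v : u⌢v ∈ T_B}. -/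
/-- The binary sequence `ŵ ∈ 2^{<ℕ}` corresponding to a word `w ∈ M₂ = ⟨a,b⟩`
(`a ↦ 0`, `b ↦ 1`), viewed inside `3^{<ℕ}`. -/
def hatSeq (w : FreeMonoid Bool) : List (Fin 3) :=
  w.toList.map (fun b => if b then 1 else 0)

/-- The tree `T_A` on `{0,1,2}` associated to `A ⊆ M₂`: all of `2^{<ℕ}` together with
the sequences `ŵ⌢2` for `w ∈ A`. -/
def treeOfSet (A : Set (FreeMonoid Bool)) : Set (List (Fin 3)) :=
  {s | ∀ x ∈ s, x ≠ 2} ∪ {s | ∃ w ∈ A, s = hatSeq w ++ [2]}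

lemma hatSeq_ne_two (w : FreeMonoid Bool) : ∀ x ∈ hatSeq w, x ≠ 2 := by
  intro x hx
  simp only [hatSeq, List.mem_map] at hx
  obtain ⟨b, -, rfl⟩ := hx
  cases b <;> decide

lemma hatSeq_mul (m w : FreeMonoid Bool) : hatSeq (m * w) = hatSeq m ++ hatSeq w := by
  simp [hatSeq, FreeMonoid.toList_mul]

lemma hatSeq_inj : Function.Injective hatSeq := by
  intro x y h
  have hf : Function.Injective (fun b : Bool => if b then (1 : Fin 3) else 0) := by decide
  have := List.map_injective_iff.mpr hf h
  exact FreeMonoid.toList.injective this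

lemma exists_hat {u : List (Fin 3)} (h : ∀ x ∈ u, x ≠ 2) : ∃ m, hatSeq m = u := by
  refine ⟨FreeMonoid.ofList (u.map fun x => decide (x = 1)), ?_⟩
  simp only [hatSeq, FreeMonoid.toList_ofList, List.map_map]
  conv_rhs => rw [← List.map_id u]
  apply List.map_congr_left
  intro x hx
  have hx2 := h x hx
  fin_cases x <;> simp_all

/-- For `A, B ⊆ M₂`: `∃ m, mA = B ∩ mM₂` iff `T_A = (T_B)_u` for some finite
sequence `u`. -/
theorem prefixQO_iff_subtree (A B : Set (FreeMonoid Bool)) :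
    (∃ m : FreeMonoid Bool, (fun a => m * a) '' A = B ∩ {w | ∃ u, w = m * u}) ↔
    (∃ u : List (Fin 3), treeOfSet A = {v | u ++ v ∈ treeOfSet B}) := by
  constructor
  · rintro ⟨m, hm⟩
    refine ⟨hatSeq m, ?_⟩
    ext v
    simp only [Set.mem_setOf_eq]
    constructor
    · rintro (hv | ⟨w, hw, rfl⟩)
      · left
        intro x hx
        rcases List.mem_append.mp hx with h | h
        · exact hatSeq_ne_two m x h
        · exact hv x h
      · right
        refine ⟨m * w, ?_, ?_⟩
        · have : m * w ∈ (fun a => m * a) '' A := ⟨w, hw, rfl⟩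
          rw [hm] at this; exact this.1
        · rw [hatSeq_mul, List.append_assoc]
    · rintro (hv | ⟨w, hw, heq⟩)
      · left
        intro x hx
        exact hv x (List.mem_append.mpr (Or.inr hx))
      · rcases List.append_eq_append_iff.mp heq with ⟨s, hs1, hs2⟩ | ⟨c, hc1, hc2⟩
        · -- hatSeq w = hatSeq m ++ s, v = s ++ [2]
          obtain ⟨cw, hcw⟩ : ∃ cw, hatSeq cw = s := by
            apply exists_hat
            intro x hx
            exact hatSeq_ne_two w x (hs1 ▸ List.mem_append.mpr (Or.inr hx))
          have hw' : w = m * cw := by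
            apply hatSeq_inj
            rw [hatSeq_mul, hcw, hs1]
          have : w ∈ (fun a => m * a) '' A := by
            rw [hm]; exact ⟨hw, cw, hw'⟩
          obtain ⟨a, ha, hma⟩ := this
          have hma' : m * a = w := hma
          have hacw : a = cw := mul_left_cancel (by rw [hma', ← hw'] : m * a = m * cw)
          right
          exact ⟨a, ha, by rw [hs2, ← hcw, hacw]⟩
        · -- hatSeq m = hatSeq w ++ c, [2] = c ++ v
          rcases c with _ | ⟨x, t⟩
          · -- c = [] : v = [2], m = w
            simp only [List.append_nil] at hc1
            have hwm : w = m := hatSeq_inj hc1.symm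
            have hv2 : v = [2] := by simpa using hc2.symm
            have : w ∈ (fun a => m * a) '' A := by
              rw [hm]; exact ⟨hw, 1, by rw [hwm, mul_one]⟩
            obtain ⟨a, ha, hma⟩ := this
            have hma' : m * a = w := hma
            have ha1 : a = 1 := mul_left_cancel (by rw [hma', hwm, mul_one] : m * a = m * 1)
            right
            refine ⟨a, ha, ?_⟩
            rw [hv2, ha1]
            simp [hatSeq]
          · exfalso
            have hx2 : x = 2 := by
              have := hc2
              simp only [List.cons_append] at this
              exact (List.cons.injEq _ _ _ _ ▸ this.symm : _ ∧ _).1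
            exact hatSeq_ne_two m x (hc1 ▸ List.mem_append.mpr (Or.inr (List.mem_cons_self (a := x) (l := t)))) hx2
  · rintro ⟨u, hu⟩
    have key : ∀ v, v ∈ treeOfSet A ↔ u ++ v ∈ treeOfSet B := fun v => Set.ext_iff.mp hu v
    have hubin : ∀ x ∈ u, x ≠ 2 := by
      have h0 : ([0] : List (Fin 3)) ∈ treeOfSet A := Or.inl (by decide)
      have := (key [0]).mp h0
      rcases this with h | ⟨w, hw, heq⟩
      · intro x hx; exact h x (List.mem_append.mpr (Or.inl hx))
      · exfalso
        have := congrArg List.getLast? heq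
        rw [show u ++ [0] = u ++ [(0 : Fin 3)] from rfl] at this
        rw [List.getLast?_concat, List.getLast?_concat] at this
        exact (by decide : (0 : Fin 3) ≠ 2) (Option.some.injEq _ _ ▸ this : _)
    obtain ⟨m, hmu⟩ := exists_hat hubin
    refine ⟨m, ?_⟩
    ext w
    constructor
    · rintro ⟨a, ha, rfl⟩
      have hA : hatSeq a ++ [2] ∈ treeOfSet A := Or.inr ⟨a, ha, rfl⟩
      have hB := (key _).mp hA
      rcases hB with h | ⟨w', hw', heq⟩
      · exact absurd (h 2 (by simp [List.mem_append])) (by simp)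
      · have : hatSeq (m * a) ++ [2] = hatSeq w' ++ [2] := by
          rw [hatSeq_mul, hmu, List.append_assoc, heq]
        have hma : m * a = w' := hatSeq_inj (List.append_cancel_right this)
        exact ⟨show m * a ∈ B from hma ▸ hw', a, rfl⟩
    · rintro ⟨hwB, c, rfl⟩
      have hB : hatSeq (m * c) ++ [2] ∈ treeOfSet B := Or.inr ⟨m * c, hwB, rfl⟩
      have hA : hatSeq c ++ [2] ∈ treeOfSet A := by
        rw [key]
        have : u ++ (hatSeq c ++ [2]) = hatSeq (m * c) ++ [2] := by
          rw [hatSeq_mul, hmu, List.append_assoc]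
        rw [this]; exact hB
      rcases hA with h | ⟨a, ha, heq⟩
      · exact absurd (h 2 (by simp [List.mem_append])) (by simp)
      · have hca : c = a := hatSeq_inj (List.append_cancel_right heq)
        exact ⟨c, hca ▸ ha, rfl⟩
end

section
/- Let G be a countable group, H a nontrivial cyclic group with generator h, and define K : 𝒫(G) → Sg(G*H) by K(A) = ⟨xhx^{-1} : x ∈ A⟩. Then K(A ∩ B) = K(A) ∩ K(B) for all A, B ⊆ G, and K(gA) = gK(A)g^{-1} for all g ∈ G. -/
open Monoid

section Aux

open scoped Classical

variable (G H : Type) [Group G] [Group H]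

/-- The normal-closure model: free product of copies of `H` indexed by `G`. -/
private abbrev NN := CoprodI (fun _ : G => H)

variable {G H}

/-- Index-shift endomorphism of `NN`. -/
private def eMap (g : G) : NN G H →* NN G H :=
  CoprodI.lift fun i => (CoprodI.of (M := fun _ : G => H) (i := g * i))

private lemma eMap_comp (g₁ g₂ : G) :
    (eMap (H := H) g₁).comp (eMap g₂) = eMap (g₁ * g₂) := by
  apply CoprodI.ext_hom
  intro i
  ext m
  simp [eMap, CoprodI.lift_of, mul_assoc]

private lemma eMap_one : eMap (H := H) (1 : G) = MonoidHom.id _ := by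
  apply CoprodI.ext_hom
  intro i
  ext m
  simp [eMap, CoprodI.lift_of]

/-- The action of `G` on `NN` by index shifting. -/
private def phi : G →* MulAut (NN G H) where
  toFun g := MonoidHom.toMulEquiv (eMap g) (eMap g⁻¹)
    (by rw [eMap_comp, inv_mul_cancel, eMap_one])
    (by rw [eMap_comp, mul_inv_cancel, eMap_one])
  map_one' := by
    ext x
    simp [eMap_one]
  map_mul' g₁ g₂ := by
    ext x
    simpa using (DFunLike.congr_fun (eMap_comp g₁ g₂) x).symm

private lemma phi_apply_of (g i : G) (m : H) :
    (phi g : MulAut (NN G H)) (CoprodI.of (M := fun _ : G => H) (i := i) m)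
      = CoprodI.of (M := fun _ : G => H) (i := g * i) m := by
  simp [phi, eMap, CoprodI.lift_of]

variable (G H)

/-- The comparison map `G ∗ H →* NN ⋊ G`. -/
private def PhiHom : Coprod G H →* (NN G H) ⋊[phi] G :=
  Coprod.lift (SemidirectProduct.inr)
    ((SemidirectProduct.inl (φ := phi)).comp (CoprodI.of (M := fun _ : G => H) (i := (1 : G))))

/-- `NN →* G ∗ H`, sending the `i`-th copy of `H` to `(inl i) (inr ·) (inl i)⁻¹`. -/
private def fone : NN G H →* Coprod G H :=
  CoprodI.lift fun i => (MulAut.conj (Coprod.inl i : Coprod G H)).toMonoidHom.comp Coprod.inr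

private lemma fone_compat (g : G) :
    (fone G H).comp ((phi g : MulAut (NN G H)).toMonoidHom)
      = (MulAut.conj ((Coprod.inl g : Coprod G H))).toMonoidHom.comp (fone G H) := by
  apply CoprodI.ext_hom
  intro i
  ext m
  simp [MulAut.mul_apply, MulAut.conj_apply, mul_assoc, fone, phi_apply_of,
    CoprodI.lift_of, map_mul, mul_inv_rev]

/-- The inverse comparison map. -/
private def PsiHom : (NN G H) ⋊[phi] G →* Coprod G H :=
  SemidirectProduct.lift (fone G H) Coprod.inl (fone_compat G H)

private lemma psi_phi : (PsiHom G H).comp (PhiHom G H) = MonoidHom.id _ := by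
  apply Coprod.hom_ext
  · ext g
    simp [PhiHom, PsiHom, Coprod.lift_apply_inl]
  · ext m
    simp [PhiHom, PsiHom, Coprod.lift_apply_inr, fone, CoprodI.lift_of]

private lemma phiHom_injective : Function.Injective (PhiHom G H) :=
  Function.LeftInverse.injective (g := PsiHom G H) (DFunLike.congr_fun (psi_phi G H))

variable {G H}

/-- Retraction of `NN` killing indices outside `S`. -/
private noncomputable def proj (S : Set G) : NN G H →* NN G H :=
  CoprodI.lift fun i =>
    if i ∈ S then (CoprodI.of (M := fun _ : G => H) (i := i)) else 1

/-- The subgroup of `NN` generated by `of_x h`, `x ∈ A`. -/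
private def CC (h : H) (A : Set G) : Subgroup (NN G H) :=
  Subgroup.closure ((fun x : G => CoprodI.of (M := fun _ : G => H) (i := x) h) '' A)

private lemma proj_fix (h : H) (A : Set G) : ∀ x ∈ CC h A, proj A x = x := by
  intro x hx
  have hle : CC h A ≤ MonoidHom.eqLocus (proj A) (MonoidHom.id _) := by
    rw [CC]
    apply Subgroup.closure_le _ |>.2
    rintro _ ⟨a, haA, rfl⟩
    show proj A _ = _
    simp [proj, CoprodI.lift_of, if_pos haA]
  exact hle hx

private lemma proj_mem (h : H) (hgen : ∀ x : H, x ∈ Subgroup.zpowers h)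
    (S : Set G) (x : NN G H) : proj S x ∈ CC h S := by
  refine CoprodI.induction_on (motive := fun y => proj S y ∈ CC h S) x ?_ ?_ ?_
  · show proj S (1 : NN G H) ∈ CC h S
    rw [map_one]; exact one_mem _
  · intro i m
    show proj S _ ∈ CC h S
    rw [proj, CoprodI.lift_of]
    by_cases hi : i ∈ S
    · rw [if_pos hi]
      obtain ⟨k, hk⟩ := hgen m
      rw [← hk, map_zpow]
      exact zpow_mem (Subgroup.subset_closure (Set.mem_image_of_mem _ hi)) k
    · rw [if_neg hi]
      simp only [MonoidHom.one_apply]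
      exact one_mem _
  · intro a b ha hb
    show proj S (a * b) ∈ CC h S
    rw [map_mul]
    exact mul_mem ha hb

private lemma proj_comp (A B : Set G) :
    (proj (H := H) A).comp (proj B) = proj (A ∩ B) := by
  apply CoprodI.ext_hom
  intro i
  ext m
  simp only [MonoidHom.comp_apply, proj, CoprodI.lift_of]
  by_cases hB : i ∈ B
  · rw [if_pos hB, CoprodI.lift_of]
    by_cases hA : i ∈ A
    · rw [if_pos hA, if_pos (Set.mem_inter hA hB)]
    · rw [if_neg hA, if_neg (fun hc : i ∈ A ∩ B => hA (Set.mem_of_mem_inter_left hc))]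
  · rw [if_neg hB, if_neg (fun hc : i ∈ A ∩ B => hB (Set.mem_of_mem_inter_right hc))]
    simp only [MonoidHom.one_apply, map_one]

private lemma CC_inf (h : H) (hgen : ∀ x : H, x ∈ Subgroup.zpowers h) (A B : Set G) :
    CC (G := G) h A ⊓ CC h B = CC h (A ∩ B) := by
  refine le_antisymm ?_ (le_inf ?_ ?_)
  · rintro x ⟨hxA, hxB⟩
    have hx : proj (A ∩ B) x = x := by
      have := DFunLike.congr_fun (proj_comp (H := H) A B) x
      simp only [MonoidHom.comp_apply] at this
      rw [← this, proj_fix h B x hxB, proj_fix h A x hxA]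
    rw [← hx]
    exact proj_mem h hgen _ x
  · exact Subgroup.closure_mono (Set.image_mono Set.inter_subset_left)
  · exact Subgroup.closure_mono (Set.image_mono Set.inter_subset_right)

private lemma map_phiHom (h : H) (A : Set G) :
    Subgroup.map (PhiHom G H)
        (Subgroup.closure
          ((fun x : G => Coprod.inl x * (Coprod.inr h : Coprod G H) * (Coprod.inl x)⁻¹) '' A))
      = Subgroup.map (SemidirectProduct.inl (φ := phi)) (CC h A) := by
  rw [MonoidHom.map_closure, CC, MonoidHom.map_closure, Set.image_image, Set.image_image]
  refine congrArg Subgroup.closure (Set.image_congr fun x _ => ?_)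
  have h1 : PhiHom G H (Coprod.inl x * (Coprod.inr h : Coprod G H) * (Coprod.inl x)⁻¹)
      = SemidirectProduct.inr x
        * SemidirectProduct.inl (φ := phi) (CoprodI.of (M := fun _ : G => H) (i := (1:G)) h)
        * (SemidirectProduct.inr x)⁻¹ := by
    simp [PhiHom, Coprod.lift_apply_inl, Coprod.lift_apply_inr]
  rw [h1, ← map_inv (SemidirectProduct.inr), ← SemidirectProduct.inl_aut, phi_apply_of, mul_one]

end Aux

/-- For a countable group `G` and a nontrivial cyclic group `H` with generator `h`, the
map `K(A) = ⟨xhx⁻¹ : x ∈ A⟩` into subgroups of the free product `G ∗ H` satisfies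
`K(A ∩ B) = K(A) ⊓ K(B)` and `K(gA) = g K(A) g⁻¹`. -/
theorem K_intersections_and_conjugates
    (G H : Type) [Group G] [Countable G] [Group H]
    (h : H) (hgen : ∀ x : H, x ∈ Subgroup.zpowers h) (hnt : h ≠ 1) :
    let K : Set G → Subgroup (Coprod G H) := fun A =>
      Subgroup.closure
        ((fun x : G => Coprod.inl x * (Coprod.inr h : Coprod G H) * (Coprod.inl x)⁻¹) '' A)
    (∀ A B : Set G, K (A ∩ B) = K A ⊓ K B) ∧
    (∀ (g : G) (A : Set G),
      K ((fun a => g * a) '' A) =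
        Subgroup.map (MulAut.conj (Coprod.inl g : Coprod G H)).toMonoidHom (K A)) := by
  intro K
  constructor
  · intro A B
    refine le_antisymm
      (le_inf (Subgroup.closure_mono (Set.image_mono Set.inter_subset_left))
        (Subgroup.closure_mono (Set.image_mono Set.inter_subset_right))) ?_
    rw [← Subgroup.map_le_map_iff_of_injective (phiHom_injective G H)]
    calc Subgroup.map (PhiHom G H) (K A ⊓ K B)
        ≤ Subgroup.map (PhiHom G H) (K A) ⊓ Subgroup.map (PhiHom G H) (K B) :=
          Subgroup.map_inf_le _ _ _
      _ = Subgroup.map (PhiHom G H) (K (A ∩ B)) := by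
          show Subgroup.map (PhiHom G H) (Subgroup.closure _)
              ⊓ Subgroup.map (PhiHom G H) (Subgroup.closure _) = _
          rw [map_phiHom h A, map_phiHom h B,
            ← Subgroup.map_inf _ _ _ SemidirectProduct.inl_injective, CC_inf h hgen]
          exact (map_phiHom h (A ∩ B)).symm
  · intro g A
    show Subgroup.closure _ = Subgroup.map _ (Subgroup.closure _)
    rw [MonoidHom.map_closure, Set.image_image, Set.image_image]
    refine congrArg Subgroup.closure (Set.image_congr fun a _ => ?_)
    simp [MulAut.conj_apply, map_mul, mul_inv_rev, mul_assoc]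
end

section
/- Let G be a countable group with a nonabelian free subgroup and H a nontrivial cyclic group. The map K(A) = ⟨xhx^{-1} : x ∈ A⟩ from infinite subsets of G to infinite subgroups of G*H satisfies: for infinite A, B ⊆ G, there exist g_1,…,g_n ∈ G with A = g_1B ∩ … ∩ g_nB if and only if there exist γ_1,…,γ_n ∈ G*H with K(A) = γ_1K(B)γ_1^{-1} ∩ … ∩ γ_nK(B)γ_n^{-1}. -/
open Monoid Monoid.CoprodI Monoid.CoprodI.Word

set_option linter.unusedSectionVars false

namespace KRed

variable {ι : Type} [DecidableEq ι] {M : ι → Type} [∀ i, Group (M i)] [∀ i, DecidableEq (M i)]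

/-- inverse of a reduced word -/
def winv (w : Word M) : Word M where
  toList := (w.toList.map (fun l => (⟨l.1, l.2⁻¹⟩ : Σ i, M i))).reverse
  ne_one := by
    intro l hl
    simp only [List.mem_reverse, List.mem_map] at hl
    obtain ⟨a, ha, rfl⟩ := hl
    simpa using w.ne_one a ha
  chain_ne := by
    rw [List.isChain_reverse, List.isChain_map]
    refine w.chain_ne.imp ?_
    intro a b hab
    simp only [flip]
    exact fun hc => hab hc.symm

lemma winv_toList (w : Word M) :
    (winv w).toList = (w.toList.map (fun l => (⟨l.1, l.2⁻¹⟩ : Σ i, M i))).reverse := rfl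

lemma prod_winv (w : Word M) : (winv w).prod = w.prod⁻¹ := by
  rw [Word.prod, Word.prod, winv_toList, List.prod_inv_reverse, List.map_reverse,
    List.map_map, List.map_map]
  rfl

lemma prod_equiv (x : CoprodI M) : (equiv x).prod = x := (equiv (M := M)).left_inv x

lemma equiv_prod (w : Word M) : equiv w.prod = w := (equiv (M := M)).right_inv w

lemma prod_injective {w₁ w₂ : Word M} (h : w₁.prod = w₂.prod) : w₁ = w₂ := by
  have h2 := congrArg (fun z => equiv (M := M) z) h
  simpa only [equiv_prod] using h2

lemma equiv_inv (x : CoprodI M) : equiv x⁻¹ = winv (equiv x) := by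
  apply prod_injective
  rw [prod_equiv, prod_winv, prod_equiv]

lemma winv_winv (w : Word M) : winv (winv w) = w := by
  apply prod_injective
  rw [prod_winv, prod_winv, inv_inv]

lemma equiv_one : equiv (1 : CoprodI M) = Word.empty := by
  apply prod_injective
  rw [prod_equiv, prod_empty]

lemma equiv_of_mul {i : ι} (m : M i) (x : CoprodI M) (hm : m ≠ 1)
    (hx : fstIdx (equiv x) ≠ some i) :
    (equiv (of m * x)).toList = ⟨i, m⟩ :: (equiv x).toList := by
  have h1 : equiv (of m * x) = of m • equiv x := by
    show (of m * x) • Word.empty = of m • equiv x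
    rw [mul_smul]; rfl
  rw [h1, ← cons_eq_smul (h1 := hx) (h2 := hm)]
  rfl

lemma fstIdx_eq (w : Word M) : fstIdx w = w.toList.head?.map Sigma.fst := rfl

lemma cons_eq_append_singleton {α : Type*} {a : α} :
    ∀ {l : List α}, a :: l = l ++ [a] → ∀ x ∈ l, x = a := by
  intro l
  induction l with
  | nil => simp
  | cons b t ih =>
    intro h x hx
    rw [List.cons_append] at h
    injection h with h1 h2
    rcases List.mem_cons.1 hx with rfl | hx
    · exact h1.symm
    · exact ih (h1 ▸ h2) x hx

lemma commute_letter_aux {i : ι} {m : M i} (hm : m ≠ 1) {y : CoprodI M}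
    (hc : of m * y = y * of m) (hy : fstIdx (equiv y) ≠ some i) : y = 1 := by
  by_contra hy1
  set f : (Σ i, M i) → (Σ i, M i) := fun l => ⟨l.1, l.2⁻¹⟩ with hf
  have hL : (equiv y).toList ≠ [] := by
    intro hnil
    apply hy1
    have he : equiv y = Word.empty := Word.ext hnil
    have := congrArg Word.prod he
    rwa [prod_equiv, prod_empty] at this
  have hLHS : (equiv (of m * y)).toList = ⟨i, m⟩ :: (equiv y).toList :=
    equiv_of_mul m y hm hy
  have hlen := congrArg (fun z => (equiv z).toList.length) hc
  by_cases hz : fstIdx (equiv y⁻¹) = some i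
  · -- last letter of y has index i
    rcases hLz : (equiv y⁻¹).toList with _ | ⟨l0, T⟩
    · exfalso
      have hnone : fstIdx (equiv y⁻¹) = none := by rw [fstIdx_eq, hLz]; rfl
      rw [hz] at hnone
      cases hnone
    obtain ⟨j, c⟩ := l0
    have hji : j = i := by
      have : fstIdx (equiv y⁻¹) = some j := by rw [fstIdx_eq, hLz]; rfl
      rw [hz] at this; exact (Option.some.inj this).symm
    subst hji
    have hch : ((⟨j, c⟩ : Σ i, M i) :: T).Chain' (fun l l' => l.1 ≠ l'.1) := by
      have := (equiv y⁻¹).chain_ne; rwa [hLz] at this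
    have hc1 : c ≠ 1 := by
      have := (equiv y⁻¹).ne_one ⟨j, c⟩ (by rw [hLz]; exact List.mem_cons_self)
      exact this
    set WT : Word M := ⟨T, fun l hl => (equiv y⁻¹).ne_one l (by rw [hLz]; exact List.mem_cons_of_mem _ hl), hch.tail⟩ with hWT
    have hWTfst : fstIdx WT ≠ some j := by
      rw [fstIdx_ne_iff]
      intro l hl
      have := List.isChain_cons.1 hch
      exact this.1 l hl
    have hdecomp : y⁻¹ = of c * WT.prod := by
      have h1 : y⁻¹ = (equiv y⁻¹).prod := (prod_equiv _).symm
      rw [h1, Word.prod, hLz]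
      simp only [List.map_cons, List.prod_cons]
      rfl
    have hy' : y * of m = WT.prod⁻¹ * of (c⁻¹ * m) := by
      have : y = WT.prod⁻¹ * of c⁻¹ := by
        have := congrArg (·⁻¹) hdecomp
        simpa [mul_inv_rev] using this
      rw [this, mul_assoc, map_mul]
    have hTlen : T.length + 1 = (equiv y).toList.length := by
      have h1 : (equiv y⁻¹).toList.length = (equiv y).toList.length := by
        rw [equiv_inv, winv_toList]; simp
      rw [← h1, hLz]; simp
    by_cases hcm : c⁻¹ * m = 1
    · -- y * of m = WT.prod⁻¹
      have h2 : y * of m = WT.prod⁻¹ := by rw [hy', hcm, map_one, mul_one]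
      have h3 : (equiv (y * of m)).toList.length = T.length := by
        rw [h2, equiv_inv, equiv_prod, winv_toList]; simp [hWT]
      rw [hLHS] at hlen
      rw [h3] at hlen
      simp at hlen
      omega
    · have hmc : m⁻¹ * c ≠ 1 := by
        intro hh
        apply hcm
        have := congrArg (·⁻¹) hh
        simpa [mul_inv_rev] using this
      have h2 : y * of m = (of (m⁻¹ * c) * WT.prod)⁻¹ := by
        rw [hy']
        rw [mul_inv_rev, map_mul]
        simp [mul_inv_rev]
      have h3 : (equiv (of (m⁻¹ * c) * WT.prod)).toList = ⟨j, m⁻¹ * c⟩ :: T := by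
        have := equiv_of_mul (i := j) (m⁻¹ * c) WT.prod hmc (by rw [equiv_prod]; exact hWTfst)
        rw [this, equiv_prod]
      have h4 : (equiv (y * of m)).toList.length = T.length + 1 := by
        rw [h2, equiv_inv, winv_toList, h3]; simp
      rw [hLHS] at hlen
      rw [h4] at hlen
      simp at hlen
      omega
  · -- both ends avoid i : palindrome trick
    have hinv : (equiv (of m⁻¹ * y⁻¹)).toList = ⟨i, m⁻¹⟩ :: (equiv y⁻¹).toList :=
      equiv_of_mul _ _ (inv_ne_one.2 hm) hz
    have hyom : y * of m = (of m⁻¹ * y⁻¹)⁻¹ := by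
      rw [mul_inv_rev, inv_inv, map_inv, inv_inv]
    have e2 : (equiv (y * of m)).toList
        = ((equiv (of m⁻¹ * y⁻¹)).toList.map f).reverse := by
      rw [hyom, equiv_inv, winv_toList]
    rw [hinv] at e2
    have e4 : ((equiv y⁻¹).toList.map f).reverse = (equiv y).toList := by
      rw [equiv_inv]
      calc ((winv (equiv y)).toList.map f).reverse
          = (winv (winv (equiv y))).toList := (winv_toList _).symm
        _ = (equiv y).toList := by rw [winv_winv]
    have e5 : (equiv (y * of m)).toList = (equiv y).toList ++ [⟨i, m⟩] := by
      rw [e2, List.map_cons, List.reverse_cons, e4]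
      simp [hf]
    have heq : (⟨i, m⟩ : Σ i, M i) :: (equiv y).toList = (equiv y).toList ++ [⟨i, m⟩] := by
      have := congrArg (fun z => (equiv z).toList) hc
      rw [hLHS, e5] at this
      exact this
    have hall := cons_eq_append_singleton heq
    rcases hL2 : (equiv y).toList with _ | ⟨l0, T⟩
    · exact hL hL2
    · have : l0 = ⟨i, m⟩ := hall l0 (by rw [hL2]; exact List.mem_cons_self)
      apply hy
      rw [fstIdx_eq, hL2, this]
      rfl

lemma commute_letter {i : ι} {m : M i} (hm : m ≠ 1) {y : CoprodI M}
    (hc : of m * y = y * of m) :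
    y = 1 ∨ (fstIdx (equiv y) = some i ∧ fstIdx (equiv y⁻¹) = some i) := by
  by_cases h1 : fstIdx (equiv y) = some i
  · by_cases h2 : fstIdx (equiv y⁻¹) = some i
    · exact Or.inr ⟨h1, h2⟩
    · have hc' : of m⁻¹ * y⁻¹ = y⁻¹ * of m⁻¹ := by
        have := congrArg (·⁻¹) hc
        simpa [mul_inv_rev] using this.symm
      have h3 := commute_letter_aux (inv_ne_one.2 hm) hc' h2
      left
      have := congrArg (·⁻¹) h3
      simpa using this
  · exact Or.inl (commute_letter_aux hm hc h1)

lemma commute_two_letters {i j : ι} (hij : i ≠ j) {m : M i} {m' : M j}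
    (hm : m ≠ 1) (hm' : m' ≠ 1) {y : CoprodI M}
    (hc1 : of m * y = y * of m) (hc2 : of m' * y = y * of m') : y = 1 := by
  rcases commute_letter hm hc1 with h | h
  · exact h
  rcases commute_letter hm' hc2 with h' | h'
  · exact h'
  rw [h.1] at h'
  exact absurd (Option.some.inj h'.1) hij


section NS

variable {ι : Type} [DecidableEq ι] {C : Type} [Group C] [DecidableEq C] (h : C)

open scoped Classical

/-- free product of copies of `C` indexed by `ι` -/
abbrev NF (ι C : Type) [Group C] : Type := CoprodI (fun _ : ι => C)

/-- retraction onto the sub-free-product with indices in `S` -/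
noncomputable def r (S : Set ι) : NF ι C →* NF ι C :=
  CoprodI.lift (fun i => if i ∈ S then (of (M := fun _ : ι => C) (i := i)) else 1)

lemma r_eq (S : Set ι) :
    r (C := C) S
      = CoprodI.lift (fun i => if i ∈ S then (of (M := fun _ : ι => C) (i := i)) else 1) := rfl

/-- the subgroup generated by the conjugates `of_b h` for `b ∈ S` -/
def NS (S : Set ι) : Subgroup (NF ι C) :=
  Subgroup.closure ((fun b => (of (M := fun _ : ι => C) (i := b)) h) '' S)

lemma r_of {S : Set ι} (b : ι) (x : C) :
    r (C := C) S (of (M := fun _ : ι => C) (i := b) x)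
      = if b ∈ S then of (M := fun _ : ι => C) (i := b) x else 1 := by
  have h0 : r (C := C) S (of (M := fun _ : ι => C) (i := b) x)
      = (if b ∈ S then (of (M := fun _ : ι => C) (i := b)) else 1) x := by
    rw [r_eq, CoprodI.lift_of]
  rw [h0]
  split_ifs with hb <;> simp

lemma r_of_mem {S : Set ι} {b : ι} (hb : b ∈ S) (x : C) :
    r (C := C) S (of (M := fun _ : ι => C) (i := b) x)
      = of (M := fun _ : ι => C) (i := b) x := by
  rw [r_of, if_pos hb]

variable (hgen : ∀ x : C, x ∈ Subgroup.zpowers h)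

include hgen in
lemma mem_NS_iff {S : Set ι} {x : NF ι C} : x ∈ NS h S ↔ r (C := C) S x = x := by
  constructor
  · intro hx
    have hle : NS h S ≤ MonoidHom.eqLocus (r (C := C) S) (MonoidHom.id _) := by
      rw [NS, Subgroup.closure_le]
      rintro _ ⟨b, hb, rfl⟩
      exact r_of_mem hb h
    exact hle hx
  · intro hx
    rw [← hx]
    clear hx
    induction x using CoprodI.induction_on with
    | one =>
      rw [map_one]; exact Subgroup.one_mem _
    | of i x =>
      rw [r_of]
      split_ifs with hi
      · obtain ⟨k, hk⟩ := hgen x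
        have hk' : x = h ^ k := hk.symm
        subst hk'
        show of (M := fun _ : ι => C) (i := i) (h ^ k) ∈ NS h S
        rw [map_zpow]
        refine Subgroup.zpow_mem _ (Subgroup.subset_closure ?_) k
        exact ⟨i, hi, rfl⟩
      · exact Subgroup.one_mem _
    | mul x y hx hy =>
      rw [map_mul]
      exact Subgroup.mul_mem _ hx hy

lemma r_r (S T : Set ι) (x : NF ι C) :
    r (C := C) S (r (C := C) T x) = r (C := C) (S ∩ T) x := by
  induction x using CoprodI.induction_on with
  | one => simp
  | of i x =>
    rw [r_of, r_of]
    by_cases hT : i ∈ T <;> by_cases hS : i ∈ S <;>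
      simp [hT, hS, r_of, Set.mem_inter_iff]
  | mul x y hx hy => rw [map_mul, map_mul, map_mul, hx, hy]

include hgen in
lemma NS_mono {S T : Set ι} (hST : S ⊆ T) : NS h S ≤ NS h T :=
  Subgroup.closure_mono (Set.image_mono hST)

include hgen in
lemma NS_inf (S T : Set ι) : NS h S ⊓ NS h T = NS h (S ∩ T) := by
  apply le_antisymm
  · intro x hx
    rw [mem_NS_iff h hgen]
    obtain ⟨hxS, hxT⟩ := Subgroup.mem_inf.1 hx
    rw [mem_NS_iff h hgen] at hxS hxT
    rw [← r_r, hxT, hxS]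
  · exact le_inf (NS_mono h hgen Set.inter_subset_left)
      (NS_mono h hgen Set.inter_subset_right)

include hgen in
lemma of_h_mem_NS_iff (hnt : h ≠ 1) {S : Set ι} {a : ι} :
    (of (M := fun _ : ι => C) (i := a)) h ∈ NS h S ↔ a ∈ S := by
  constructor
  · intro hx
    rw [mem_NS_iff h hgen, r_of] at hx
    split_ifs at hx with ha
    · exact ha
    · exfalso
      apply hnt
      apply CoprodI.of_injective a
      rw [map_one, ← hx]
  · intro ha
    exact Subgroup.subset_closure ⟨a, ha, rfl⟩

include hgen in
lemma NS_injective (hnt : h ≠ 1) {S T : Set ι} (hST : NS h S = NS h T) : S = T := by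
  ext a
  rw [← of_h_mem_NS_iff h hgen hnt (S := S), ← of_h_mem_NS_iff h hgen hnt (S := T), hST]

/-- projection detecting the index `a` -/
noncomputable def projIdx (a : ι) : NF ι C →* C :=
  CoprodI.lift (fun i => if i = a then MonoidHom.id C else 1)

lemma projIdx_of (a b : ι) (x : C) :
    projIdx (a := a) (of (M := fun _ : ι => C) (i := b) x) = if b = a then x else 1 := by
  have h0 : projIdx (a := a) (of (M := fun _ : ι => C) (i := b) x)
      = (if b = a then MonoidHom.id C else 1) x := by
    have : projIdx (C := C) (a := a)
        = CoprodI.lift (fun i => if i = a then MonoidHom.id C else 1) := rfl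
    rw [this, CoprodI.lift_of]
  rw [h0]
  split_ifs with hb <;> simp

include hgen in
lemma comm_C (x y : C) : x * y = y * x := by
  obtain ⟨k, hk⟩ := hgen x
  obtain ⟨l, hl⟩ := hgen y
  rw [← hk, ← hl]
  exact ((Commute.refl h).zpow_zpow k l)

include hgen in
lemma index_mem (hnt : h ≠ 1) {w : NF ι C} {a : ι} {S : Set ι}
    (hmem : w⁻¹ * (of (M := fun _ : ι => C) (i := a)) h * w ∈ NS h S) : a ∈ S := by
  by_contra ha
  have h1 : ∀ x ∈ NS h S, projIdx (a := a) x = 1 := by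
    intro x hx
    have hle : NS h S ≤ (projIdx (a := a) (C := C)).ker := by
      rw [NS, Subgroup.closure_le]
      rintro _ ⟨b, hb, rfl⟩
      have hba : b ≠ a := fun hba => ha (hba ▸ hb)
      simp [MonoidHom.mem_ker, projIdx_of, hba]
    exact hle hx
  have h2 := h1 _ hmem
  rw [map_mul, map_mul, map_inv, projIdx_of] at h2
  rw [if_pos rfl] at h2
  set c := projIdx (a := a) w with hc
  rw [show c⁻¹ * h * c = h by rw [comm_C h hgen c⁻¹ h, mul_assoc, inv_mul_cancel, mul_one]] at h2
  exact hnt h2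

include hgen in
lemma conj_mem_NS (hnt : h ≠ 1) {S : Set ι} {w : NF ι C} {a₁ a₂ : ι} (ha : a₁ ≠ a₂)
    (h1 : w⁻¹ * (of (M := fun _ : ι => C) (i := a₁)) h * w ∈ NS h S)
    (h2 : w⁻¹ * (of (M := fun _ : ι => C) (i := a₂)) h * w ∈ NS h S) :
    w ∈ NS h S := by
  set y : NF ι C := w * (r (C := C) S w)⁻¹ with hy
  have key : ∀ a : ι, a ∈ S →
      w⁻¹ * (of (M := fun _ : ι => C) (i := a)) h * w ∈ NS h S →
      (of (M := fun _ : ι => C) (i := a)) h * y = y * (of (M := fun _ : ι => C) (i := a)) h := by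
    intro a haS hz
    set z := w⁻¹ * (of (M := fun _ : ι => C) (i := a)) h * w with hzdef
    have hzfix : r (C := C) S z = z := (mem_NS_iff h hgen).1 hz
    have hwz : (of (M := fun _ : ι => C) (i := a)) h = w * z * w⁻¹ := by
      rw [hzdef]; group
    have hwz2 : (of (M := fun _ : ι => C) (i := a)) h
        = r (C := C) S w * z * (r (C := C) S w)⁻¹ := by
      have := congrArg (r (C := C) S) hwz
      rwa [r_of_mem haS, map_mul, map_mul, map_inv, hzfix] at this
    rw [hy]
    calc (of (M := fun _ : ι => C) (i := a)) h * (w * (r (C := C) S w)⁻¹)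
        = (w * z * w⁻¹) * (w * (r (C := C) S w)⁻¹) := by rw [← hwz]
      _ = w * z * (r (C := C) S w)⁻¹ := by group
      _ = (w * (r (C := C) S w)⁻¹) * (r (C := C) S w * z * (r (C := C) S w)⁻¹) := by group
      _ = (w * (r (C := C) S w)⁻¹) * (of (M := fun _ : ι => C) (i := a)) h := by rw [← hwz2]
  have ha₁S : a₁ ∈ S := index_mem h hgen hnt h1
  have ha₂S : a₂ ∈ S := index_mem h hgen hnt h2
  have hy1 : y = 1 :=
    commute_two_letters ha hnt hnt (key a₁ ha₁S h1) (key a₂ ha₂S h2)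
  have hw : r (C := C) S w = w := by
    rw [hy] at hy1
    have := mul_inv_eq_one.1 hy1
    exact this.symm
  exact (mem_NS_iff h hgen).2 hw

end NS

section Bridge

variable {G H : Type} [Group G] [Group H] [DecidableEq G] [DecidableEq H]

/-- index-translation automorphism ingredient -/
def τ (g : G) : NF G H →* NF G H :=
  CoprodI.lift (fun i => of (M := fun _ : G => H) (i := g * i))

lemma τ_eq (g : G) :
    τ (H := H) g = CoprodI.lift (fun i => of (M := fun _ : G => H) (i := g * i)) := rfl

lemma τ_of (g i : G) (x : H) :
    τ (H := H) g (of (M := fun _ : G => H) (i := i) x)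
      = of (M := fun _ : G => H) (i := g * i) x := by
  rw [τ_eq, CoprodI.lift_of]

lemma τ_comp (g g' : G) :
    (τ (H := H) g).comp (τ g') = τ (g * g') := by
  apply CoprodI.ext_hom
  intro i
  ext x
  simp only [MonoidHom.comp_apply, τ_of, mul_assoc]

lemma τ_one : τ (H := H) (1 : G) = MonoidHom.id _ := by
  apply CoprodI.ext_hom
  intro i
  ext x
  simp only [MonoidHom.comp_apply, τ_of, one_mul, MonoidHom.id_apply]

/-- the index-translation automorphism -/
def σ' (g : G) : MulAut (NF G H) :=
  MonoidHom.toMulEquiv (τ g) (τ g⁻¹)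
    (by rw [τ_comp, inv_mul_cancel, τ_one]) (by rw [τ_comp, mul_inv_cancel, τ_one])

lemma σ'_apply (g : G) (x : NF G H) : σ' g x = τ (H := H) g x := rfl

/-- the action of `G` on the free product of copies of `H` -/
def σmap : G →* MulAut (NF G H) where
  toFun := σ'
  map_one' := by
    apply MulEquiv.ext
    intro x
    rw [σ'_apply, τ_one, MulAut.one_apply, MonoidHom.id_apply]
  map_mul' := fun g g' => by
    apply MulEquiv.ext
    intro x
    rw [MulAut.mul_apply, σ'_apply, σ'_apply, σ'_apply, ← MonoidHom.comp_apply, τ_comp]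

lemma σmap_of (g i : G) (x : H) :
    σmap g (of (M := fun _ : G => H) (i := i) x)
      = of (M := fun _ : G => H) (i := g * i) x := τ_of g i x

/-- the semidirect product `N ⋊ G` -/
abbrev SD (G H : Type) [Group G] [Group H] [DecidableEq G] [DecidableEq H] : Type :=
  SemidirectProduct (NF G H) G σmap

/-- the embedding of `G ∗ H` into `N ⋊ G` -/
def ρ : Coprod G H →* SD G H :=
  Coprod.lift SemidirectProduct.inr
    (SemidirectProduct.inl.comp (of (M := fun _ : G => H) (i := (1 : G))))

lemma ρ_inl (g : G) : ρ (H := H) (Coprod.inl g) = SemidirectProduct.inr g :=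
  Coprod.lift_apply_inl _ _ g

lemma ρ_inr (x : H) :
    ρ (G := G) (Coprod.inr x)
      = SemidirectProduct.inl (of (M := fun _ : G => H) (i := (1 : G)) x) :=
  Coprod.lift_apply_inr _ _ x

/-- the inverse of `ρ` -/
def ψ : SD G H →* Coprod G H :=
  SemidirectProduct.lift
    (CoprodI.lift (fun x : G =>
      ((MulAut.conj (Coprod.inl x : Coprod G H)).toMonoidHom).comp Coprod.inr))
    Coprod.inl
    (by
      intro g
      apply CoprodI.ext_hom
      intro i
      ext x
      simp only [MonoidHom.comp_apply, MulEquiv.coe_toMonoidHom, σmap_of, CoprodI.lift_of,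
        MulAut.conj_apply, map_mul, MulAut.mul_apply, mul_assoc, mul_inv_rev]
      )

lemma ψ_comp_ρ : (ψ (G := G) (H := H)).comp ρ = MonoidHom.id _ := by
  apply Coprod.hom_ext
  · ext g
    simp only [MonoidHom.comp_apply, MonoidHom.id_apply, ρ_inl]
    rw [ψ, SemidirectProduct.lift_inr]
  · ext x
    simp only [MonoidHom.comp_apply, MonoidHom.id_apply, ρ_inr]
    rw [ψ, SemidirectProduct.lift_inl, CoprodI.lift_of]
    simp [MulAut.conj_apply]

lemma ρ_injective : Function.Injective (ρ (G := G) (H := H)) := by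
  intro a b hab
  have h1 := DFunLike.congr_fun (ψ_comp_ρ (G := G) (H := H)) a
  have h2 := DFunLike.congr_fun (ψ_comp_ρ (G := G) (H := H)) b
  simp only [MonoidHom.comp_apply, MonoidHom.id_apply] at h1 h2
  rw [← h1, ← h2, hab]

lemma ρ_gen (x : G) (h : H) :
    ρ (Coprod.inl x * Coprod.inr h * (Coprod.inl x)⁻¹)
      = SemidirectProduct.inl (of (M := fun _ : G => H) (i := x) h) := by
  rw [map_mul, map_mul, map_inv, ρ_inl, ρ_inr]
  rw [show (SemidirectProduct.inr x : SD G H)⁻¹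
      = SemidirectProduct.inr x⁻¹ from (map_inv _ x).symm]
  rw [← SemidirectProduct.inl_aut]
  congr 1
  rw [show (σmap x) (of (M := fun _ : G => H) (i := (1 : G)) h)
      = of (M := fun _ : G => H) (i := x * 1) h from σmap_of x 1 h]
  rw [mul_one]

end Bridge

section Main

variable {G H : Type} [Group G] [Group H]

/-- the subgroup `K(S)` -/
def KK (h : H) (S : Set G) : Subgroup (Coprod G H) :=
  Subgroup.closure
    ((fun x : G => Coprod.inl x * (Coprod.inr h : Coprod G H) * (Coprod.inl x)⁻¹) '' S)

variable [DecidableEq G] [DecidableEq H] (h : H)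

lemma map_ρ_KK (S : Set G) :
    Subgroup.map ρ (KK h S) = Subgroup.map SemidirectProduct.inl (NS h S) := by
  rw [KK, NS, MonoidHom.map_closure, MonoidHom.map_closure, Set.image_image, Set.image_image]
  congr 1
  apply Set.image_congr
  intro b _
  exact ρ_gen b h

lemma mem_conj_map_iff {M : Type} [Group M] {P : Subgroup M} {w x : M} :
    x ∈ Subgroup.map (MulAut.conj w).toMonoidHom P ↔ w⁻¹ * x * w ∈ P := by
  simp only [Subgroup.mem_map, MulEquiv.coe_toMonoidHom, MulAut.conj_apply]
  constructor
  · rintro ⟨p, hp, rfl⟩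
    have hp' : w⁻¹ * (w * p * w⁻¹) * w = p := by group
    rwa [hp']
  · intro hx
    exact ⟨w⁻¹ * x * w, hx, by group⟩

lemma conj_map_self {M : Type} [Group M] {P : Subgroup M} {w : M} (hw : w ∈ P) :
    Subgroup.map (MulAut.conj w).toMonoidHom P = P := by
  ext x
  rw [mem_conj_map_iff]
  constructor
  · intro hx
    have h2 := P.mul_mem (P.mul_mem hw hx) (P.inv_mem hw)
    have h3 : w * (w⁻¹ * x * w) * w⁻¹ = x := by group
    rwa [h3] at h2
  · intro hx
    exact P.mul_mem (P.mul_mem (P.inv_mem hw) hx) hw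

lemma σ_NS (g : G) (S : Set G) :
    Subgroup.map (σmap (H := H) g).toMonoidHom (NS h S)
      = NS h ((fun b => g * b) '' S) := by
  rw [NS, NS, MonoidHom.map_closure, Set.image_image, Set.image_image]
  congr 1

lemma conj_inl_sd (δ : SD G H) (n : NF G H) :
    δ * SemidirectProduct.inl n * δ⁻¹
      = SemidirectProduct.inl (δ.left * σmap δ.right n * δ.left⁻¹) := by
  conv_lhs => rw [← SemidirectProduct.inl_left_mul_inr_right δ]
  rw [mul_inv_rev,
    show (SemidirectProduct.inr δ.right : SD G H)⁻¹
      = SemidirectProduct.inr δ.right⁻¹ from (map_inv _ _).symm,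
    show (SemidirectProduct.inl δ.left : SD G H)⁻¹
      = SemidirectProduct.inl δ.left⁻¹ from (map_inv _ _).symm]
  calc SemidirectProduct.inl δ.left * SemidirectProduct.inr δ.right * SemidirectProduct.inl n *
        (SemidirectProduct.inr δ.right⁻¹ * SemidirectProduct.inl δ.left⁻¹)
      = SemidirectProduct.inl δ.left *
          (SemidirectProduct.inr δ.right * SemidirectProduct.inl n *
            SemidirectProduct.inr δ.right⁻¹) * SemidirectProduct.inl δ.left⁻¹ := by group
    _ = SemidirectProduct.inl δ.left * SemidirectProduct.inl (σmap δ.right n) *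
          SemidirectProduct.inl δ.left⁻¹ := by rw [← SemidirectProduct.inl_aut]
    _ = SemidirectProduct.inl (δ.left * σmap δ.right n * δ.left⁻¹) := by
          rw [← map_mul, ← map_mul]

lemma conj_map_inl (δ : SD G H) (P : Subgroup (NF G H)) :
    Subgroup.map (MulAut.conj δ).toMonoidHom (Subgroup.map SemidirectProduct.inl P)
      = Subgroup.map SemidirectProduct.inl
          (Subgroup.map (MulAut.conj δ.left).toMonoidHom
            (Subgroup.map (σmap δ.right).toMonoidHom P)) := by
  rw [Subgroup.map_map, Subgroup.map_map, Subgroup.map_map]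
  congr 1
  apply MonoidHom.ext
  intro n
  simp only [MonoidHom.comp_apply, MulEquiv.coe_toMonoidHom, MulAut.conj_apply]
  exact conj_inl_sd δ n

lemma map_ρ_conj (γ : Coprod G H) (P : Subgroup (Coprod G H)) :
    Subgroup.map ρ (Subgroup.map (MulAut.conj γ).toMonoidHom P)
      = Subgroup.map (MulAut.conj (ρ γ)).toMonoidHom (Subgroup.map ρ P) := by
  rw [Subgroup.map_map, Subgroup.map_map]
  congr 1
  apply MonoidHom.ext
  intro x
  simp only [MonoidHom.comp_apply, MulEquiv.coe_toMonoidHom, MulAut.conj_apply, map_mul, map_inv]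

variable (hgen : ∀ x : H, x ∈ Subgroup.zpowers h) (hnt : h ≠ 1)

include hgen in
lemma KK_inf (S T : Set G) : KK (G := G) h S ⊓ KK h T = KK h (S ∩ T) := by
  apply Subgroup.map_injective (ρ_injective (G := G) (H := H))
  rw [Subgroup.map_inf _ _ _ ρ_injective, map_ρ_KK, map_ρ_KK, map_ρ_KK,
    ← Subgroup.map_inf _ _ _ SemidirectProduct.inl_injective, NS_inf h hgen]

lemma finset_iInf_eq {α M : Type} [Group M] (F : Set G → Subgroup M)
    (hF : ∀ S T, F S ⊓ F T = F (S ∩ T)) (f : α → Set G) :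
    ∀ t : Finset α, t.Nonempty → (⨅ x ∈ t, F (f x)) = F (⋂ x ∈ t, f x) := by
  classical
  intro t
  induction t using Finset.induction_on with
  | empty => intro ht; exact absurd ht (by simp)
  | insert a s hnotmem ih =>
    intro _
    rcases s.eq_empty_or_nonempty with rfl | hs
    · simp
    · rw [Finset.iInf_insert, ih hs, Finset.set_biInter_insert, hF]

lemma map_finset_iInf {M N : Type} [Group M] [Group N] (f : M →* N)
    (hf : Function.Injective f) {α : Type} (X : α → Subgroup M) :
    ∀ t : Finset α, t.Nonempty →
      Subgroup.map f (⨅ x ∈ t, X x) = ⨅ x ∈ t, Subgroup.map f (X x) := by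
  classical
  intro t
  induction t using Finset.induction_on with
  | empty => intro ht; exact absurd ht (by simp)
  | insert a s hnotmem ih =>
    intro _
    rcases s.eq_empty_or_nonempty with rfl | hs
    · simp
    · rw [Finset.iInf_insert, Finset.iInf_insert, Subgroup.map_inf _ _ _ hf, ih hs]

include hgen in
lemma conj_KK (g : G) (B : Set G) :
    Subgroup.map (MulAut.conj (Coprod.inl g : Coprod G H)).toMonoidHom (KK h B)
      = KK h ((fun a => g * a) '' B) := by
  rw [KK, KK, MonoidHom.map_closure, Set.image_image, Set.image_image]
  congr 1
  apply Set.image_congr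
  intro b _
  simp only [MulEquiv.coe_toMonoidHom, MulAut.conj_apply, map_mul, mul_inv_rev, map_inv]
  group

include hgen hnt in
lemma main_iff (A B : Set G) (hA : A.Infinite) :
    (∃ s : Finset G, s.Nonempty ∧ A = ⋂ g ∈ s, (fun a => g * a) '' B) ↔
      (∃ t : Finset (Coprod G H), t.Nonempty ∧
        KK h A = ⨅ γ ∈ t, Subgroup.map (MulAut.conj γ).toMonoidHom (KK h B)) := by
  classical
  constructor
  · rintro ⟨s, hsne, hAB⟩
    refine ⟨s.image (fun g => Coprod.inl g), hsne.image _, ?_⟩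
    rw [Finset.iInf_finset_image]
    conv_lhs => rw [hAB]
    have hconj : ∀ g : G, Subgroup.map
          (MulAut.conj (Coprod.inl g : Coprod G H)).toMonoidHom (KK h B)
        = KK h ((fun a => g * a) '' B) := fun g => conj_KK h hgen g B
    simp only [hconj]
    exact (finset_iInf_eq (KK h) (fun S T => KK_inf h hgen S T)
      (fun g => (fun a => g * a) '' B) s hsne).symm
  · rintro ⟨t, htne, hKt⟩
    have hterm : ∀ γ : Coprod G H,
        Subgroup.map ρ (Subgroup.map (MulAut.conj γ).toMonoidHom (KK h B))
          = Subgroup.map SemidirectProduct.inl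
              (Subgroup.map (MulAut.conj (ρ γ).left).toMonoidHom
                (NS h ((fun b => (ρ γ).right * b) '' B))) := by
      intro γ
      rw [map_ρ_conj, map_ρ_KK, conj_map_inl, σ_NS]
    have h1 := congrArg (Subgroup.map (ρ (G := G) (H := H))) hKt
    rw [map_ρ_KK, map_finset_iInf ρ ρ_injective _ t htne] at h1
    simp only [hterm] at h1
    rw [← map_finset_iInf SemidirectProduct.inl SemidirectProduct.inl_injective _ t htne] at h1
    have step2 := Subgroup.map_injective SemidirectProduct.inl_injective h1
    have key : ∀ γ ∈ t,
        Subgroup.map (MulAut.conj (ρ γ).left).toMonoidHom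
            (NS h ((fun b => (ρ γ).right * b) '' B))
          = NS h ((fun b => (ρ γ).right * b) '' B) := by
      intro γ hγ
      have hle : NS h A ≤ Subgroup.map (MulAut.conj (ρ γ).left).toMonoidHom
          (NS h ((fun b => (ρ γ).right * b) '' B)) := by
        rw [step2]
        exact biInf_le _ hγ
      obtain ⟨a₁, ha₁, a₂, ha₂, hne⟩ := hA.nontrivial
      have hmem : ∀ a ∈ A, ((ρ (G := G) (H := H) γ).left)⁻¹ *
          (of (M := fun _ : G => H) (i := a) h) * (ρ γ).left
            ∈ NS h ((fun b => (ρ γ).right * b) '' B) := by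
        intro a ha
        have hin : (of (M := fun _ : G => H) (i := a) h) ∈ NS h A :=
          Subgroup.subset_closure ⟨a, ha, rfl⟩
        have := hle hin
        rwa [mem_conj_map_iff] at this
      exact conj_map_self (conj_mem_NS h hgen hnt hne (hmem a₁ ha₁) (hmem a₂ ha₂))
    have step3 : NS (ι := G) h A
        = NS h (⋂ γ ∈ t, (fun b => (ρ (G := G) (H := H) γ).right * b) '' B) := by
      rw [step2]
      have : (⨅ γ ∈ t, Subgroup.map (MulAut.conj (ρ γ).left).toMonoidHom
            (NS h ((fun b => (ρ (G := G) (H := H) γ).right * b) '' B)))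
          = ⨅ γ ∈ t, NS h ((fun b => (ρ γ).right * b) '' B) := by
        apply iInf_congr
        intro γ
        apply iInf_congr
        intro hγ
        exact key γ hγ
      rw [this]
      exact finset_iInf_eq (NS h) (fun S T => NS_inf h hgen S T) _ t htne
    have hAeq := NS_injective h hgen hnt step3
    refine ⟨t.image (fun γ => (ρ γ).right), htne.image _, ?_⟩
    rw [Finset.set_biInter_finset_image]
    exact hAeq

end Main

end KRed

/-- For a countable group `G` containing a nonabelian free subgroup and a nontrivial
cyclic group `H` with generator `h`, the map `K(A) = ⟨xhx⁻¹ : x ∈ A⟩` from infinite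
subsets of `G` to (infinite) subgroups of `G ∗ H` satisfies: for infinite `A, B ⊆ G`,
`A = g₁B ∩ … ∩ gₙB` for some `g₁,…,gₙ ∈ G` iff
`K(A) = γ₁K(B)γ₁⁻¹ ∩ … ∩ γₙK(B)γₙ⁻¹` for some `γ₁,…,γₙ ∈ G ∗ H`. -/
theorem K_reduction
    (G H : Type) [Group G] [Countable G] [Group H]
    (hfree : ∃ φ : FreeGroup Bool →* G, Function.Injective φ)
    (h : H) (hgen : ∀ x : H, x ∈ Subgroup.zpowers h) (hnt : h ≠ 1)
    (A B : Set G) (hA : A.Infinite) (hB : B.Infinite) :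
    let K : Set G → Subgroup (Coprod G H) := fun A =>
      Subgroup.closure
        ((fun x : G => Coprod.inl x * (Coprod.inr h : Coprod G H) * (Coprod.inl x)⁻¹) '' A)
    ((∃ s : Finset G, s.Nonempty ∧ A = ⋂ g ∈ s, (fun a => g * a) '' B) ↔
      (∃ t : Finset (Coprod G H), t.Nonempty ∧
        K A = ⨅ γ ∈ t, Subgroup.map (MulAut.conj γ).toMonoidHom (K B))) := by
  letI : DecidableEq G := Classical.decEq G
  letI : DecidableEq H := Classical.decEq H
  intro K
  exact KRed.main_iff h hgen hnt A B hA
end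

section
/- Define endomorphisms f_0, f_1 of the free group F_2 = ⟨x,y⟩ by f_0(x) = x^5y, f_0(y) = y^5x, f_1(x) = x^2yxyx, f_1(y) = y^2xyxy, and for w ∈ 2^{<ℕ} let f_w be the corresponding composition. Then for every w ∈ 2^{<ℕ}, the first letters of f_w(x), f_w(y), f_w(x^{-1}), f_w(y^{-1}) are pairwise distinct, and likewise their last letters; consequently f_w maps freely reduced words to freely reduced words and cyclically reduced words to cyclically reduced words. -/
/-- `x` and `y`, the generators of `F₂ = FreeGroup Bool` (`x = of false`, `y = of true`). -/
def Fx : FreeGroup Bool := FreeGroup.of false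
def Fy : FreeGroup Bool := FreeGroup.of true

/-- `f₀ : x ↦ x⁵y, y ↦ y⁵x`. -/
def F0 : Monoid.End (FreeGroup Bool) :=
  FreeGroup.lift (fun b => if b then Fy ^ 5 * Fx else Fx ^ 5 * Fy)

/-- `f₁ : x ↦ x²yxyx, y ↦ y²xyxy`. -/
def F1 : Monoid.End (FreeGroup Bool) :=
  FreeGroup.lift (fun b => if b then Fy ^ 2 * Fx * Fy * Fx * Fy
    else Fx ^ 2 * Fy * Fx * Fy * Fx)

/-- `f_w` for `w ∈ 2^{<ℕ}`: the composition of the `f_i` along `w`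
(`f_e = id`, `f_{u⌢v} = f_u ∘ f_v`). -/
def Fw (w : List Bool) : Monoid.End (FreeGroup Bool) :=
  (w.map (fun b => if b then F1 else F0)).prod

/-- The image under `f_w` of a single letter `ℓ ∈ {x^{±1}, y^{±1}}`
(a letter is a pair (generator, sign)). -/
def FwLetter (w : List Bool) (ℓ : Bool × Bool) : FreeGroup Bool :=
  Fw w (FreeGroup.mk [ℓ])

/-- A word is cyclically reduced if its first letter is not the inverse of its last. -/
def CyclicallyReduced (g : FreeGroup Bool) : Prop :=
  ∀ p q : Bool × Bool, g.toWord.head? = some p → g.toWord.getLast? = some q →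
    p ≠ (q.1, !q.2)

namespace FwAux

/-- formal inverse of a letter -/
def linv (p : Bool × Bool) : Bool × Bool := (p.1, !p.2)

/-- no cancellation between adjacent letters -/
def Rnc (p q : Bool × Bool) : Prop := p ≠ linv q

lemma linv_linv (p : Bool × Bool) : linv (linv p) = p := by
  cases p; simp [linv]

lemma linv_inj : Function.Injective linv :=
  Function.LeftInverse.injective linv_linv

lemma rnc_flip {p q : Bool × Bool} (h : p ≠ linv q) : q ≠ linv p := by
  intro e; exact h (by rw [e, linv_linv])

lemma reduce_eq_iff_chain (L : List (Bool × Bool)) :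
    FreeGroup.reduce L = L ↔ List.Chain' Rnc L := by
  induction L with
  | nil => simp [List.Chain']
  | cons x L ih =>
    constructor
    · intro h
      rcases hL : FreeGroup.reduce L with _ | ⟨hd, tl⟩
      · rw [FreeGroup.reduce.cons, hL] at h
        simp only [List.cons.injEq] at h
        rw [← h.2]; simp [List.Chain']
      · rw [FreeGroup.reduce.cons, hL] at h
        change (if x.1 = hd.1 ∧ x.2 = !hd.2 then tl else x :: hd :: tl) = x :: L at h
        by_cases hc : x.1 = hd.1 ∧ x.2 = !hd.2
        · rw [if_pos hc] at h
          have hlen : (FreeGroup.reduce L).length ≤ L.length :=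
            (FreeGroup.Red.sublist FreeGroup.reduce.red).length_le
          rw [hL] at hlen
          have : L.length + 1 = tl.length := by rw [h]; rfl
          simp [List.length_cons] at hlen
          omega
        · rw [if_neg hc] at h
          simp only [List.cons.injEq] at h
          have hL' : L = hd :: tl := h.2.symm
          have : List.Chain' Rnc L := ih.mp (by rw [hL, hL'])
          rw [hL']
          simp only [List.Chain', List.isChain_cons_cons]
          refine ⟨?_, by rw [← hL']; exact this⟩
          intro e
          exact hc ⟨by rw [e]; rfl, by rw [e]; rfl⟩
    · intro h
      rcases L with _ | ⟨hd, tl⟩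
      · rfl
      · simp only [List.Chain', List.isChain_cons_cons] at h
        have hred : FreeGroup.reduce (hd :: tl) = hd :: tl := ih.mpr h.2
        rw [FreeGroup.reduce.cons, hred]
        show (if x.1 = hd.1 ∧ x.2 = !hd.2 then tl else x :: hd :: tl) = x :: hd :: tl
        rw [if_neg]
        intro hc
        exact h.1 (Prod.ext hc.1 hc.2)

/-- The block of a letter under an endomorphism. -/
def blk (φ : Monoid.End (FreeGroup Bool)) (ℓ : Bool × Bool) : List (Bool × Bool) :=
  (φ (FreeGroup.mk [ℓ])).toWord

lemma blk_chain (φ : Monoid.End (FreeGroup Bool)) (ℓ : Bool × Bool) :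
    List.Chain' Rnc (blk φ ℓ) :=
  (reduce_eq_iff_chain _).mp (FreeGroup.reduce_toWord _)

lemma blk_linv (φ : Monoid.End (FreeGroup Bool)) (ℓ : Bool × Bool) :
    blk φ (linv ℓ) = FreeGroup.invRev (blk φ ℓ) := by
  have h1 : FreeGroup.mk [linv ℓ] = (FreeGroup.mk [ℓ])⁻¹ := by
    rw [FreeGroup.inv_mk]; rfl
  rw [blk, h1, map_inv, FreeGroup.toWord_inv]; rfl

lemma blk_head_linv (φ : Monoid.End (FreeGroup Bool)) (ℓ : Bool × Bool) :
    (blk φ (linv ℓ)).head? = (blk φ ℓ).getLast?.map linv := by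
  rw [blk_linv, FreeGroup.invRev, List.head?_reverse, List.getLast?_map]; rfl

lemma blk_getLast (φ : Monoid.End (FreeGroup Bool)) (ℓ : Bool × Bool) :
    (blk φ ℓ).getLast? = ((blk φ (linv ℓ)).head?).map linv := by
  rw [blk_head_linv]
  rcases (blk φ ℓ).getLast? with _ | a <;> simp [linv_linv]

/-- The key invariant: all blocks nonempty & first letters pairwise distinct. -/
def GoodE (φ : Monoid.End (FreeGroup Bool)) : Prop :=
  (∀ ℓ, blk φ ℓ ≠ []) ∧ Function.Injective (fun ℓ => (blk φ ℓ).head?)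

lemma good_last_inj {φ} (h : GoodE φ) :
    Function.Injective (fun ℓ => (blk φ ℓ).getLast?) := by
  intro a b hab
  simp only [blk_getLast] at hab
  exact linv_inj (h.2 (Option.map_injective linv_inj hab))

lemma good_junction {φ} (h : GoodE φ) {p q : Bool × Bool} (hpq : p ≠ linv q) :
    ∀ a ∈ (blk φ p).getLast?, ∀ b ∈ (blk φ q).head?, a ≠ linv b := by
  intro a ha b hb e
  rw [Option.mem_def, blk_getLast] at ha
  rcases Option.map_eq_some_iff.mp ha with ⟨a', ha', rfl⟩
  have ha'b : a' = b := linv_inj e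
  have : (blk φ (linv p)).head? = (blk φ q).head? := by
    rw [ha', ha'b, hb]
  have hlp : linv p = q := h.2 this
  exact hpq (by rw [← hlp, linv_linv])

lemma map_mk (φ : Monoid.End (FreeGroup Bool)) (L : List (Bool × Bool)) :
    φ (FreeGroup.mk L) = FreeGroup.mk (L.flatMap (blk φ)) := by
  induction L with
  | nil =>
    rw [show FreeGroup.mk ([] : List (Bool × Bool)) = 1 from FreeGroup.one_eq_mk.symm,
      map_one, FreeGroup.one_eq_mk]
    rfl
  | cons ℓ L ih =>
    have h1 : FreeGroup.mk (ℓ :: L) = FreeGroup.mk [ℓ] * FreeGroup.mk L := by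
      rw [FreeGroup.mul_mk]; rfl
    rw [h1, map_mul, ih, ← FreeGroup.mk_toWord (x := φ (FreeGroup.mk [ℓ])),
      FreeGroup.mul_mk]
    rfl

lemma chain_flatMap {φ} (h : GoodE φ) :
    ∀ {L : List (Bool × Bool)}, List.Chain' Rnc L →
      List.Chain' Rnc (L.flatMap (blk φ)) := by
  intro L
  induction L with
  | nil => intro _; simp [List.Chain']
  | cons ℓ L ih =>
    intro hc
    simp only [List.Chain'] at hc ⊢
    rw [List.flatMap_cons, List.isChain_append]
    refine ⟨blk_chain φ ℓ, ih hc.tail, ?_⟩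
    intro a ha b hb
    rcases L with _ | ⟨ℓ', L'⟩
    · simp at hb
    · rw [List.flatMap_cons, List.head?_append_of_ne_nil _ (h.1 ℓ')] at hb
      have hℓℓ' : Rnc ℓ ℓ' := (List.isChain_cons_cons.mp hc).1
      exact good_junction h hℓℓ' a ha b hb

lemma toWord_flatMap {φ} (h : GoodE φ) (g : FreeGroup Bool) :
    (φ g).toWord = g.toWord.flatMap (blk φ) := by
  conv_lhs => rw [← FreeGroup.mk_toWord (x := g)]
  rw [map_mk, FreeGroup.toWord_mk]
  exact (reduce_eq_iff_chain _).mpr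
    (chain_flatMap h ((reduce_eq_iff_chain _).mp (FreeGroup.reduce_toWord g)))

lemma blk_mul {φ ψ : Monoid.End (FreeGroup Bool)} (h : GoodE φ) (ℓ : Bool × Bool) :
    blk (φ * ψ) ℓ = (blk ψ ℓ).flatMap (blk φ) := by
  show (φ (ψ (FreeGroup.mk [ℓ]))).toWord = _
  exact toWord_flatMap h _

lemma goodE_mul {φ ψ : Monoid.End (FreeGroup Bool)} (hφ : GoodE φ) (hψ : GoodE ψ) :
    GoodE (φ * ψ) := by
  constructor
  · intro ℓ
    rw [blk_mul hφ]
    rcases h' : blk ψ ℓ with _ | ⟨a, t⟩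
    · exact absurd h' (hψ.1 ℓ)
    · rw [List.flatMap_cons]
      simp [hφ.1 a]
  · intro a b hab
    simp only [blk_mul hφ] at hab
    rcases ha : blk ψ a with _ | ⟨pa, ta⟩
    · exact absurd ha (hψ.1 a)
    rcases hb : blk ψ b with _ | ⟨pb, tb⟩
    · exact absurd hb (hψ.1 b)
    rw [ha, hb, List.flatMap_cons, List.flatMap_cons,
      List.head?_append_of_ne_nil _ (hφ.1 pa),
      List.head?_append_of_ne_nil _ (hφ.1 pb)] at hab
    have hpab : pa = pb := hφ.2 hab
    apply hψ.2
    show (blk ψ a).head? = (blk ψ b).head?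
    rw [ha, hb, hpab]
    simp

lemma goodE_one : GoodE 1 := by
  have hb : ∀ ℓ : Bool × Bool, blk 1 ℓ = [ℓ] := by
    intro ℓ
    show (FreeGroup.mk [ℓ]).toWord = [ℓ]
    rw [FreeGroup.toWord_mk]
    rfl
  constructor
  · intro ℓ; rw [hb]; simp
  · intro a b hab; simp only [hb] at hab; simpa using hab

end FwAux

section Blocks
open FwAux

lemma elem0x : F0 (FreeGroup.mk [(false,true)]) =
    FreeGroup.mk [(false,true),(false,true),(false,true),(false,true),(false,true),(true,true)] := by
  have h1 : FreeGroup.mk [(false,true)] = FreeGroup.of false := rfl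
  rw [h1]
  show FreeGroup.lift _ (FreeGroup.of false) = _
  rw [FreeGroup.lift_apply_of]
  simp only [Bool.false_eq_true, if_false, Fx, Fy, FreeGroup.of]
  rw [show (5:ℕ) = 1+1+1+1+1 from rfl]
  simp only [pow_add, pow_one, FreeGroup.mul_mk]
  rfl

lemma elem0y : F0 (FreeGroup.mk [(true,true)]) =
    FreeGroup.mk [(true,true),(true,true),(true,true),(true,true),(true,true),(false,true)] := by
  have h1 : FreeGroup.mk [(true,true)] = FreeGroup.of true := rfl
  rw [h1]
  show FreeGroup.lift _ (FreeGroup.of true) = _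
  rw [FreeGroup.lift_apply_of]
  simp only [if_true, Fx, Fy, FreeGroup.of]
  rw [show (5:ℕ) = 1+1+1+1+1 from rfl]
  simp only [pow_add, pow_one, FreeGroup.mul_mk]
  rfl

lemma elem1x : F1 (FreeGroup.mk [(false,true)]) =
    FreeGroup.mk [(false,true),(false,true),(true,true),(false,true),(true,true),(false,true)] := by
  have h1 : FreeGroup.mk [(false,true)] = FreeGroup.of false := rfl
  rw [h1]
  show FreeGroup.lift _ (FreeGroup.of false) = _
  rw [FreeGroup.lift_apply_of]
  simp only [Bool.false_eq_true, if_false, Fx, Fy, FreeGroup.of]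
  rw [show (2:ℕ) = 1+1 from rfl]
  simp only [pow_add, pow_one, FreeGroup.mul_mk]
  rfl

lemma elem1y : F1 (FreeGroup.mk [(true,true)]) =
    FreeGroup.mk [(true,true),(true,true),(false,true),(true,true),(false,true),(true,true)] := by
  have h1 : FreeGroup.mk [(true,true)] = FreeGroup.of true := rfl
  rw [h1]
  show FreeGroup.lift _ (FreeGroup.of true) = _
  rw [FreeGroup.lift_apply_of]
  simp only [if_true, Fx, Fy, FreeGroup.of]
  rw [show (2:ℕ) = 1+1 from rfl]
  simp only [pow_add, pow_one, FreeGroup.mul_mk]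
  rfl

lemma blk0x : blk F0 (false,true) =
    [(false,true),(false,true),(false,true),(false,true),(false,true),(true,true)] := by
  rw [blk, elem0x, FreeGroup.toWord_mk]; rfl

lemma blk0y : blk F0 (true,true) =
    [(true,true),(true,true),(true,true),(true,true),(true,true),(false,true)] := by
  rw [blk, elem0y, FreeGroup.toWord_mk]; rfl

lemma blk0X : blk F0 (false,false) =
    [(true,false),(false,false),(false,false),(false,false),(false,false),(false,false)] := by
  rw [show ((false,false) : Bool × Bool) = linv (false,true) from rfl, blk_linv, blk0x]; rfl

lemma blk0Y : blk F0 (true,false) =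
    [(false,false),(true,false),(true,false),(true,false),(true,false),(true,false)] := by
  rw [show ((true,false) : Bool × Bool) = linv (true,true) from rfl, blk_linv, blk0y]; rfl

lemma blk1x : blk F1 (false,true) =
    [(false,true),(false,true),(true,true),(false,true),(true,true),(false,true)] := by
  rw [blk, elem1x, FreeGroup.toWord_mk]; rfl

lemma blk1y : blk F1 (true,true) =
    [(true,true),(true,true),(false,true),(true,true),(false,true),(true,true)] := by
  rw [blk, elem1y, FreeGroup.toWord_mk]; rfl

lemma blk1X : blk F1 (false,false) =
    [(false,false),(true,false),(false,false),(true,false),(false,false),(false,false)] := by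
  rw [show ((false,false) : Bool × Bool) = linv (false,true) from rfl, blk_linv, blk1x]; rfl

lemma blk1Y : blk F1 (true,false) =
    [(true,false),(false,false),(true,false),(false,false),(true,false),(true,false)] := by
  rw [show ((true,false) : Bool × Bool) = linv (true,true) from rfl, blk_linv, blk1y]; rfl

lemma goodE_F0 : GoodE F0 := by
  constructor
  · rintro ⟨a, b⟩
    cases a <;> cases b <;> simp [blk0x, blk0y, blk0X, blk0Y]
  · rintro ⟨a, b⟩ ⟨c, d⟩ h
    cases a <;> cases b <;> cases c <;> cases d <;>
      simp_all [blk0x, blk0y, blk0X, blk0Y]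

lemma goodE_F1 : GoodE F1 := by
  constructor
  · rintro ⟨a, b⟩
    cases a <;> cases b <;> simp [blk1x, blk1y, blk1X, blk1Y]
  · rintro ⟨a, b⟩ ⟨c, d⟩ h
    cases a <;> cases b <;> cases c <;> cases d <;>
      simp_all [blk1x, blk1y, blk1X, blk1Y]

lemma goodE_Fw (w : List Bool) : GoodE (Fw w) := by
  induction w with
  | nil => exact goodE_one
  | cons b w ih =>
    have hFw : Fw (b :: w) = (if b then F1 else F0) * Fw w := by
      simp [Fw]
    rw [hFw]
    cases b
    · exact goodE_mul goodE_F0 ih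
    · exact goodE_mul goodE_F1 ih

end Blocks

/-- For every `w ∈ 2^{<ℕ}`, the first letters of `f_w(x), f_w(y), f_w(x⁻¹), f_w(y⁻¹)`
are pairwise distinct, and likewise the last letters; consequently `f_w` maps freely
reduced words to freely reduced words (the image of a reduced word is the concatenation
of the `f_w`-blocks of its letters, with no cancellation) and cyclically reduced words
to cyclically reduced words. -/
theorem Fw_letters_distinct (w : List Bool) :
    Function.Injective (fun ℓ : Bool × Bool => (FwLetter w ℓ).toWord.head?) ∧
    Function.Injective (fun ℓ : Bool × Bool => (FwLetter w ℓ).toWord.getLast?) ∧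
    (∀ g : FreeGroup Bool,
      (Fw w g).toWord = g.toWord.flatMap (fun ℓ => (FwLetter w ℓ).toWord)) ∧
    (∀ g : FreeGroup Bool, CyclicallyReduced g → CyclicallyReduced (Fw w g)) := by

  have h := goodE_Fw w
  refine ⟨h.2, FwAux.good_last_inj h, fun g => FwAux.toWord_flatMap h g, ?_⟩
  intro g hg p q hp hq
  rw [FwAux.toWord_flatMap h] at hp hq
  show p ≠ FwAux.linv q
  rcases hL : g.toWord with _ | ⟨ℓh, t⟩
  · rw [hL] at hp; simp at hp
  · have hp' : (FwAux.blk (Fw w) ℓh).head? = some p := by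
      rw [hL, List.flatMap_cons, List.head?_append_of_ne_nil _ (h.1 ℓh)] at hp
      exact hp
    have hne : g.toWord ≠ [] := by rw [hL]; simp
    obtain ⟨L', ℓl, hL2⟩ : ∃ L' ℓl, g.toWord = L' ++ [ℓl] := by
      rcases List.eq_nil_or_concat g.toWord with h' | ⟨L', ℓl, h'⟩
      · exact absurd h' hne
      · exact ⟨L', ℓl, by rw [h', List.concat_eq_append]⟩
    have hq' : (FwAux.blk (Fw w) ℓl).getLast? = some q := by
      rw [hL2, List.flatMap_append] at hq
      rw [show [ℓl].flatMap (FwAux.blk (Fw w)) =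
        FwAux.blk (Fw w) ℓl ++ [] from rfl, List.append_nil, List.getLast?_append] at hq
      rcases hbl : (FwAux.blk (Fw w) ℓl).getLast? with _ | q0
      · exact absurd (List.getLast?_eq_none_iff.mp hbl) (h.1 ℓl)
      · rw [hbl] at hq; simpa using hq
    have hgh : g.toWord.head? = some ℓh := by rw [hL]; rfl
    have hgl : g.toWord.getLast? = some ℓl := by rw [hL2]; simp
    have hcr : ℓh ≠ FwAux.linv ℓl := hg ℓh ℓl hgh hgl
    have hj := FwAux.good_junction h (FwAux.rnc_flip hcr) q hq' p hp'
    exact FwAux.rnc_flip hj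
end

section
/- Let f_0, f_1 be the endomorphisms of F_2 = ⟨x,y⟩ given by f_0(x)=x^5y, f_0(y)=y^5x, f_1(x)=x^2yxyx, f_1(y)=y^2xyxy, and f_u their compositions for u ∈ 2^{<ℕ}. If a ∈ {x^{±1}, y^{±1}} and b, c ∈ {x^{±1}, y^{±1}}, and f_u(a) occurs as a subword of the (freely reduced) word f_u(b)f_u(c), then f_u(a) = f_u(b) or f_u(a) = f_u(c). Consequently, for nontrivial freely reduced α, β ∈ F_2, if f_u(α) is a subword of f_u(β) then α is a subword of β. -/
abbrev Ltr := Bool × Bool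

/-- reducedness of a word -/
def Red (w : List Ltr) : Prop := w.Chain' (fun p q => p ≠ (q.1, !q.2))

def redB : List Ltr → Bool
  | [] => true
  | [_] => true
  | p :: q :: l => !(p == (q.1, !q.2)) && redB (q :: l)

lemma red_iff : ∀ w, Red w ↔ redB w = true
  | [] => by simp [Red, redB, List.Chain']
  | [p] => by simp [Red, redB, List.Chain']
  | p :: q :: l => by
    have := red_iff (q :: l)
    simp only [Red, List.Chain', List.isChain_cons_cons, redB, Bool.and_eq_true, Bool.not_eq_true',
      beq_eq_false_iff_ne, ne_eq] at *
    tauto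

instance : DecidablePred Red := fun w => decidable_of_iff (redB w = true) (red_iff w).symm

lemma chain'_of_splits {α : Type*} {R : α → α → Prop} :
    ∀ {l : List α}, (∀ (l₁ : List α) p q l₂, l = l₁ ++ p :: q :: l₂ → R p q) → l.Chain' R
  | [], _ => List.isChain_nil
  | [a], _ => List.isChain_singleton a
  | a :: b :: l, h => by
    unfold List.Chain'
    rw [List.isChain_cons_cons]
    exact ⟨h [] a b l rfl, chain'_of_splits (fun l₁ p q l₂ hl => h (a :: l₁) p q l₂ (by rw [hl]; rfl))⟩

lemma red_reduce (w : List Ltr) : Red (FreeGroup.reduce w) := by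
  apply chain'_of_splits
  intro l₁ p q l₂ hl hpq
  refine FreeGroup.reduce.not (L₁ := w) (L₂ := l₁) (L₃ := l₂) (x := q.1) (b := !q.2) ?_
  rw [hl, hpq]
  simp

lemma red_toWord (g : FreeGroup Bool) : Red g.toWord := by
  rw [← FreeGroup.reduce_toWord]; exact red_reduce _

lemma reduce_eq_self : ∀ {w : List Ltr}, Red w → FreeGroup.reduce w = w
  | [], _ => rfl
  | [p], _ => rfl
  | p :: q :: l, h => by
    have h' : p ≠ (q.1, !q.2) ∧ List.Chain' _ (q :: l) := List.isChain_cons_cons.mp h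
    have ih := reduce_eq_self (w := q :: l) h'.2
    rw [FreeGroup.reduce.cons, ih]
    simp only []
    rw [if_neg]
    intro ⟨h1, h2⟩
    exact h'.1 (Prod.ext h1 h2)

lemma toWord_mk_red {w : List Ltr} (h : Red w) : (FreeGroup.mk w).toWord = w := by
  rw [FreeGroup.toWord_mk, reduce_eq_self h]

lemma toWord_mul (g h : FreeGroup Bool) :
    (g * h).toWord = FreeGroup.reduce (g.toWord ++ h.toWord) := by
  conv_lhs => rw [← FreeGroup.mk_toWord (x := g), ← FreeGroup.mk_toWord (x := h)]
  rw [FreeGroup.mul_mk, FreeGroup.toWord_mk]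

/-- concrete blocks for f₀ and f₁ -/
def blk (i : Bool) (ℓ : Ltr) : List Ltr :=
  match i, ℓ with
  | false, (false, true)  => [(false,true),(false,true),(false,true),(false,true),(false,true),(true,true)]
  | false, (true, true)   => [(true,true),(true,true),(true,true),(true,true),(true,true),(false,true)]
  | false, (false, false) => [(true,false),(false,false),(false,false),(false,false),(false,false),(false,false)]
  | false, (true, false)  => [(false,false),(true,false),(true,false),(true,false),(true,false),(true,false)]
  | true,  (false, true)  => [(false,true),(false,true),(true,true),(false,true),(true,true),(false,true)]
  | true,  (true, true)   => [(true,true),(true,true),(false,true),(true,true),(false,true),(true,true)]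
  | true,  (false, false) => [(false,false),(true,false),(false,false),(true,false),(false,false),(false,false)]
  | true,  (true, false)  => [(true,false),(false,false),(true,false),(false,false),(true,false),(true,false)]

lemma mk_single (a s : Bool) :
    FreeGroup.mk [(a, s)] = if s then FreeGroup.of a else (FreeGroup.of a)⁻¹ := by
  cases s
  · show FreeGroup.mk [(a, false)] = (FreeGroup.mk [(a, true)])⁻¹
    rw [FreeGroup.inv_mk]
    simp [FreeGroup.invRev]
  · rfl

lemma blk_mk_pos : ∀ i (a : Bool),
    (if i then F1 else F0) (FreeGroup.mk [(a, true)]) = FreeGroup.mk (blk i (a, true)) := by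
  have e0f : F0 (FreeGroup.mk [(false, true)]) = FreeGroup.mk (blk false (false, true)) := by
    rw [show F0 (FreeGroup.mk [(false, true)]) = Fx ^ 5 * Fy from FreeGroup.lift_apply_of]
    simp [Fx, Fy, FreeGroup.of, FreeGroup.pow_mk, FreeGroup.mul_mk, blk]
  have e0t : F0 (FreeGroup.mk [(true, true)]) = FreeGroup.mk (blk false (true, true)) := by
    rw [show F0 (FreeGroup.mk [(true, true)]) = Fy ^ 5 * Fx from FreeGroup.lift_apply_of]
    simp [Fx, Fy, FreeGroup.of, FreeGroup.pow_mk, FreeGroup.mul_mk, blk]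
  have e1f : F1 (FreeGroup.mk [(false, true)]) = FreeGroup.mk (blk true (false, true)) := by
    rw [show F1 (FreeGroup.mk [(false, true)]) = Fx ^ 2 * Fy * Fx * Fy * Fx from FreeGroup.lift_apply_of]
    simp [Fx, Fy, FreeGroup.of, FreeGroup.pow_mk, FreeGroup.mul_mk, blk]
  have e1t : F1 (FreeGroup.mk [(true, true)]) = FreeGroup.mk (blk true (true, true)) := by
    rw [show F1 (FreeGroup.mk [(true, true)]) = Fy ^ 2 * Fx * Fy * Fx * Fy from FreeGroup.lift_apply_of]
    simp [Fx, Fy, FreeGroup.of, FreeGroup.pow_mk, FreeGroup.mul_mk, blk]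
  rintro (_|_) (_|_)
  · exact e0f
  · exact e0t
  · exact e1f
  · exact e1t

lemma blk_mk : ∀ i (ℓ : Ltr), (if i then F1 else F0) (FreeGroup.mk [ℓ]) = FreeGroup.mk (blk i ℓ) := by
  rintro i ⟨a, (_|_)⟩
  · have h1 : FreeGroup.mk [(a, false)] = (FreeGroup.mk [(a, true)])⁻¹ := by
      rw [FreeGroup.inv_mk]; simp [FreeGroup.invRev]
    rw [h1, map_inv, blk_mk_pos, FreeGroup.inv_mk]
    congr 1
    cases i <;> cases a <;> simp [FreeGroup.invRev, blk]
  · exact blk_mk_pos i a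

lemma blk_red : ∀ i ℓ, Red (blk i ℓ) := by decide

lemma blk_toWord (i : Bool) (ℓ : Ltr) :
    ((if i then F1 else F0) (FreeGroup.mk [ℓ])).toWord = blk i ℓ := by
  rw [blk_mk, toWord_mk_red (blk_red i ℓ)]

lemma blk_length : ∀ i ℓ, (blk i ℓ).length = 6 := by decide

lemma blk_inj : ∀ i (a b : Ltr), blk i a = blk i b → a = b := by decide

lemma blk_boundary : ∀ i (p q : Ltr), p ≠ (q.1, !q.2) →
    ∀ x ∈ (blk i p).getLast?, ∀ y ∈ (blk i q).head?, x ≠ (y.1, !y.2) := by decide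

lemma blk_rigid_k : ∀ (i : Bool) (a b c : Ltr), b ≠ (c.1, !c.2) → ∀ k : Fin 7,
    blk i a = ((blk i b ++ blk i c).drop k.val).take 6 →
    (k.val = 0 ∧ a = b) ∨ (k.val = 6 ∧ a = c) := by decide

-- chunk 2 (to be appended to base)
section GBsec

/-- Good block system for an endomorphism of F₂. -/
structure GB (φ : Monoid.End (FreeGroup Bool)) (B : Ltr → List Ltr) (M : ℕ) : Prop where
  hM : 0 < M
  len : ∀ ℓ, (B ℓ).length = M
  inj : ∀ a b, B a = B b → a = b
  app : ∀ w, Red w → (φ (FreeGroup.mk w)).toWord = (w.map B).flatten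
  rigid : ∀ a b c, b ≠ (c.1, !c.2) → ∀ s t, s ++ B a ++ t = B b ++ B c →
    (s = [] ∧ a = b) ∨ (t = [] ∧ a = c)

variable {φ : Monoid.End (FreeGroup Bool)} {B : Ltr → List Ltr} {M : ℕ}

lemma GB.block_red (h : GB φ B M) (ℓ : Ltr) : Red (B ℓ) := by
  have h1 := h.app [ℓ] (List.isChain_singleton ℓ)
  simp only [List.map_cons, List.map_nil, List.flatten_cons, List.flatten_nil,
    List.append_nil] at h1
  rw [← h1]
  exact red_toWord _

lemma GB.flatten_red (h : GB φ B M) {w : List Ltr} (hw : Red w) : Red ((w.map B).flatten) := by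
  rw [← h.app w hw]; exact red_toWord _

lemma GB.block_ne_nil (h : GB φ B M) (ℓ : Ltr) : B ℓ ≠ [] := by
  intro hc
  have h1 := h.len ℓ
  rw [hc] at h1
  simp at h1
  have := h.hM
  omega

lemma GB.flatten_len (h : GB φ B M) (w : List Ltr) :
    ((w.map B).flatten).length = M * w.length := by
  induction w with
  | nil => simp
  | cons a w ih => simp [ih, h.len a, Nat.mul_succ, Nat.mul_add]; ring

lemma flatten_nil_iff (h : GB φ B M) (w : List Ltr) :
    ((w.map B).flatten) = [] ↔ w = [] := by
  cases w with
  | nil => simp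
  | cons a w =>
    simp only [List.map_cons, List.flatten_cons]
    constructor
    · intro hc
      exact absurd (List.append_eq_nil_iff.mp hc).1 (h.block_ne_nil a)
    · intro hc; cases hc

/-- single-block alignment: an occurrence of a block `B a` inside the block decomposition of a
reduced word `w` must be aligned with one of its blocks. -/
lemma GB.align_one (h : GB φ B M) :
    ∀ (w : List Ltr), Red w → ∀ (a : Ltr) (s t : List Ltr),
      s ++ B a ++ t = (w.map B).flatten →
      ∃ w₁ w₂, w = w₁ ++ a :: w₂ ∧ s = ((w₁.map B).flatten) := by
  intro w
  induction w with
  | nil =>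
    intro _ a s t he
    exfalso
    apply h.block_ne_nil a
    simp only [List.map_nil, List.flatten_nil] at he
    rcases List.append_eq_nil_iff.mp (List.append_assoc s (B a) t ▸ he) with ⟨-, h2⟩
    exact (List.append_eq_nil_iff.mp h2).1
  | cons c w' ih =>
    intro hred a s t he
    have hred' : Red w' := hred.tail
    simp only [List.map_cons, List.flatten_cons] at he
    by_cases hs : M ≤ s.length
    · -- B c is a prefix of s
      have h1 : s.take M = B c := by
        have h0 := congrArg (List.take M) he
        rw [List.take_append_of_le_length (by simp; omega),
          List.take_append_of_le_length hs,
          List.take_append_of_le_length (le_of_eq (h.len c).symm),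
          List.take_of_length_le (le_of_eq (h.len c))] at h0
        exact h0
      have h2 : s = B c ++ s.drop M := by rw [← h1, List.take_append_drop]
      have h3 : (B c ++ s.drop M) ++ B a ++ t = B c ++ (w'.map B).flatten := by
        rw [← h2, he]
      rw [List.append_assoc (B c), List.append_assoc (B c)] at h3
      have h4 := List.append_cancel_left h3
      obtain ⟨w₁, w₂, hw, hs'⟩ := ih hred' a _ t h4
      refine ⟨c :: w₁, w₂, by rw [hw]; rfl, by rw [h2, hs']; simp⟩
    · push_neg at hs
      cases w' with
      | nil =>
        -- s and t must be empty
        simp only [List.map_nil, List.flatten_nil, List.append_nil] at he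
        have hl := congrArg List.length he
        simp only [List.length_append, h.len, List.length_nil] at hl
        have hs0 : s.length = 0 := by omega
        have ht0 : t.length = 0 := by omega
        rw [List.length_eq_zero_iff] at hs0 ht0
        subst hs0; subst ht0
        simp only [List.nil_append, List.append_nil] at he
        exact ⟨[], [], by rw [h.inj a c he]; rfl, rfl⟩
      | cons c' w'' =>
        have hcc' : c ≠ (c'.1, !c'.2) := (List.isChain_cons_cons.mp hred).1
        -- restrict to the first 2M letters
        have he2 : s ++ B a ++ t.take (M - s.length) = B c ++ B c' := by
          have h2M := congrArg (List.take (2 * M)) he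
          rw [List.take_append,
            List.take_of_length_le (show (s ++ B a).length ≤ 2 * M by simp [h.len]; omega),
            show 2 * M - (s ++ B a).length = M - s.length by simp [h.len]; omega] at h2M
          rw [List.map_cons, List.flatten_cons, ← List.append_assoc,
            List.take_append,
            List.take_of_length_le (show (B c ++ B c').length ≤ 2 * M by simp [h.len]; omega),
            show 2 * M - (B c ++ B c').length = 0 by simp [h.len]; omega, List.take_zero,
            List.append_nil] at h2M
          exact h2M
        rcases h.rigid a c c' hcc' s _ he2 with ⟨hs0, rfl⟩ | ⟨ht0, rfl⟩
        · exact ⟨[], c' :: w'', by simp, by rw [hs0]; rfl⟩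
        · exfalso
          -- t.take (M - s.length) = [] with M - s.length > 0 forces t = [], contradiction
          have hpos : 0 < M - s.length := by omega
          have ht : t = [] := by
            rcases t with _ | ⟨p, t'⟩
            · rfl
            · exfalso
              have := congrArg List.length ht0
              simp [List.length_take] at this
              omega
          subst ht
          have hl := congrArg List.length he
          simp only [List.length_append, h.len, List.length_nil, List.map_cons,
            List.flatten_cons, h.flatten_len] at hl
          omega

/-- multi-block alignment. -/
lemma GB.align (h : GB φ B M) :
    ∀ (v : List Ltr), Red v → v ≠ [] → ∀ (w : List Ltr), Red w → ∀ (s t : List Ltr),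
      s ++ (v.map B).flatten ++ t = (w.map B).flatten →
      ∃ w₁ w₂, w = w₁ ++ v ++ w₂ ∧ s = ((w₁.map B).flatten) ∧ t = ((w₂.map B).flatten) := by
  intro v
  induction v with
  | nil => intro _ hv; exact absurd rfl hv
  | cons a v' ih =>
    intro hredv _ w hredw s t he
    simp only [List.map_cons, List.flatten_cons] at he
    have he' : s ++ B a ++ ((v'.map B).flatten ++ t) = (w.map B).flatten := by
      rw [← he]; simp [List.append_assoc]
    obtain ⟨w₁, w₂, hw, hs⟩ := h.align_one w hredw a _ _ he'
    -- cancel to get the equation for the remainder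
    have hflat : (w.map B).flatten = ((w₁.map B).flatten) ++ (B a ++ ((w₂.map B).flatten)) := by
      rw [hw]; simp
    have hrem : (v'.map B).flatten ++ t = (w₂.map B).flatten := by
      rw [hflat, ← hs] at he'
      have he'' : s ++ (B a ++ ((v'.map B).flatten ++ t)) = s ++ (B a ++ (w₂.map B).flatten) := by
        simpa [List.append_assoc] using he'
      exact List.append_cancel_left (List.append_cancel_left he'')
    have hredw2 : Red (a :: w₂) := ((List.isChain_append.mp (hw ▸ hredw)).2).1
    rcases v' with _ | ⟨a', v''⟩
    · exact ⟨w₁, w₂, by rw [hw]; simp, hs, by simpa using hrem⟩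
    · have hredv' : Red (a' :: v'') := hredv.tail
      obtain ⟨w₁', w₂', hw2, hs', ht'⟩ :=
        ih hredv' (by simp) w₂ hredw2.tail [] t (by simpa using hrem)
      have hw1' : w₁' = [] := (flatten_nil_iff h w₁').mp hs'.symm
      subst hw1'
      simp only [List.nil_append] at hw2
      exact ⟨w₁, w₂', by rw [hw, hw2]; simp, hs, ht'⟩

end GBsec

-- chunk 3
section Comp

variable {φ ψ : Monoid.End (FreeGroup Bool)} {B C : Ltr → List Ltr} {M N : ℕ}

lemma comp_flatten (B C : Ltr → List Ltr) :
    ∀ w : List Ltr, (((w.map B).flatten).map C).flatten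
      = (w.map (fun ℓ => ((B ℓ).map C).flatten)).flatten := by
  intro w
  induction w with
  | nil => simp
  | cons a w ih => simp only [List.map_cons, List.flatten_cons, List.map_append,
      List.flatten_append, ih]

lemma GB.comp (hC : GB ψ C M) (hB : GB φ B N) :
    GB (ψ * φ) (fun ℓ => ((B ℓ).map C).flatten) (M * N) := by
  constructor
  · exact Nat.mul_pos hC.hM hB.hM
  · intro ℓ
    rw [hC.flatten_len, hB.len]
  · intro a b hab
    obtain ⟨w₁, w₂, hw, hs, ht⟩ := hC.align (B a) (hB.block_red a) (hB.block_ne_nil a)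
      (B b) (hB.block_red b) [] [] (by simpa using hab)
    have hw₁ : w₁ = [] := (flatten_nil_iff hC w₁).mp hs.symm
    have hw₂ : w₂ = [] := (flatten_nil_iff hC w₂).mp ht.symm
    subst hw₁; subst hw₂
    simp only [List.nil_append, List.append_nil] at hw
    exact hB.inj a b hw.symm
  · intro w hw
    have h1 : φ (FreeGroup.mk w) = FreeGroup.mk ((w.map B).flatten) := by
      rw [← hB.app w hw, FreeGroup.mk_toWord]
    have h2 : (ψ * φ) (FreeGroup.mk w) = ψ (φ (FreeGroup.mk w)) := rfl
    rw [h2, h1, hC.app _ (hB.flatten_red hw), comp_flatten]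
  · intro a b c hbc s t he
    have hbcred : Red [b, c] := List.isChain_pair.mpr hbc
    have hBbc : Red (B b ++ B c) := by
      have := hB.flatten_red hbcred
      simpa using this
    have he' : s ++ ((B a).map C).flatten ++ t = (((B b ++ B c).map C).flatten) := by
      rw [List.map_append, List.flatten_append]
      exact he
    obtain ⟨w₁, w₂, hw, hs, ht⟩ := hC.align (B a) (hB.block_red a) (hB.block_ne_nil a)
      (B b ++ B c) hBbc s t he'
    rcases hB.rigid a b c hbc w₁ w₂ hw.symm with ⟨h1, h2⟩ | ⟨h1, h2⟩
    · left
      exact ⟨by rw [hs, h1]; rfl, h2⟩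
    · right
      exact ⟨by rw [ht, h1]; rfl, h2⟩

lemma map_singleton_flatten : ∀ w : List Ltr, (w.map (fun ℓ => [ℓ])).flatten = w := by
  intro w
  induction w with
  | nil => rfl
  | cons a w ih => simp only [List.map_cons, List.flatten_cons, ih, List.singleton_append]

lemma GB_one : GB 1 (fun ℓ => [ℓ]) 1 := by
  constructor
  · exact Nat.one_pos
  · intro ℓ; rfl
  · intro a b hab; simpa using hab
  · intro w hw
    have h1 : (1 : Monoid.End (FreeGroup Bool)) (FreeGroup.mk w) = FreeGroup.mk w := rfl
    rw [h1, toWord_mk_red hw, map_singleton_flatten]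
  · intro a b c hbc s t he
    rcases s with _ | ⟨p, (_ | ⟨q, s'⟩)⟩
    · have he' : a :: t = [b, c] := by simpa using he
      injection he' with h1 _
      exact Or.inl ⟨rfl, h1⟩
    · have he' : p :: a :: t = [b, c] := by simpa using he
      injection he' with h1 h2
      injection h2 with h3 h4
      exact Or.inr ⟨h4, h3⟩
    · exfalso
      have := congrArg List.length he
      simp only [List.length_append, List.length_cons, List.length_singleton, List.length_nil] at this
      omega

lemma GB_blk (i : Bool) : GB (if i then F1 else F0) (blk i) 6 := by
  constructor
  · omega
  · exact blk_length i
  · exact blk_inj i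
  · intro w hw
    induction w with
    | nil =>
      rw [show FreeGroup.mk ([] : List Ltr) = 1 from (FreeGroup.one_eq_mk).symm, map_one]
      simp [FreeGroup.toWord_one]
    | cons ℓ w' ih =>
      have hsplit : FreeGroup.mk (ℓ :: w') = FreeGroup.mk [ℓ] * FreeGroup.mk w' := by
        rw [FreeGroup.mul_mk]; rfl
      rw [hsplit, map_mul, toWord_mul, blk_toWord, ih hw.tail]
      apply reduce_eq_self
      unfold Red List.Chain'
      rw [List.isChain_append]
      refine ⟨blk_red i ℓ, ?_, ?_⟩
      · have : (w'.map (blk i)).flatten = ((if i then F1 else F0) (FreeGroup.mk w')).toWord :=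
          (ih hw.tail).symm
        rw [this]
        exact red_toWord _
      · intro x hx y hy
        cases w' with
        | nil => simp at hy
        | cons ℓ' w'' =>
          have hll' : ℓ ≠ (ℓ'.1, !ℓ'.2) := (List.isChain_cons_cons.mp hw).1
          refine blk_boundary i ℓ ℓ' hll' x hx y ?_
          simp only [List.map_cons, List.flatten_cons] at hy
          rwa [List.head?_append_of_ne_nil _ (by
            intro hc
            have h1 := blk_length i ℓ'
            rw [hc] at h1
            simp at h1)] at hy
  · intro a b c hbc s t he
    have hlen : s.length + 6 + t.length = 12 := by
      have := congrArg List.length he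
      simp [blk_length] at this
      omega
    have hs6 : s.length ≤ 6 := by omega
    have hd : blk i a = ((blk i b ++ blk i c).drop s.length).take 6 := by
      rw [← he, List.append_assoc, List.drop_left, List.take_left' (blk_length i a)]
    rcases blk_rigid_k i a b c hbc ⟨s.length, by omega⟩ hd with ⟨h1, h2⟩ | ⟨h1, h2⟩
    · exact Or.inl ⟨List.length_eq_zero_iff.mp h1, h2⟩
    · exact Or.inr ⟨List.length_eq_zero_iff.mp (by simp at h1; omega), h2⟩

def Blk : List Bool → Ltr → List Ltr
  | [] => fun ℓ => [ℓ]
  | i :: u => fun ℓ => (((Blk u) ℓ).map (blk i)).flatten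

lemma GB_Fw : ∀ u : List Bool, GB (Fw u) (Blk u) (6 ^ u.length)
  | [] => by
    have h : Fw [] = 1 := rfl
    rw [h]
    exact GB_one
  | i :: u => by
    have h : Fw (i :: u) = (if i then F1 else F0) * Fw u := by
      simp [Fw]
    rw [h]
    have := (GB_blk i).comp (GB_Fw u)
    have hpow : 6 * 6 ^ u.length = 6 ^ (i :: u).length := by
      rw [List.length_cons, pow_succ]; ring
    rw [hpow] at this
    exact this

end Comp

-- chunk 4
section Fin

variable {φ : Monoid.End (FreeGroup Bool)} {B : Ltr → List Ltr} {M : ℕ}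

lemma red_pair {w : List Ltr} (hw : Red w) {i : ℕ} {p q : Ltr}
    (hp : w[i]? = some p) (hq : w[i+1]? = some q) : p ≠ (q.1, !q.2) := by
  have hi1 : i + 1 < w.length := by
    by_contra hc
    rw [List.getElem?_eq_none (by omega)] at hq
    cases hq
  have hp' : w[i]'(by omega) = p := by
    rw [List.getElem?_eq_getElem (by omega)] at hp
    exact Option.some.inj hp
  have hq' : w[i+1]'hi1 = q := by
    rw [List.getElem?_eq_getElem hi1] at hq
    exact Option.some.inj hq
  have hchain := List.isChain_iff_getElem.mp hw i (by omega)
  rw [hp', hq'] at hchain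
  exact hchain

lemma GB.degenerate (h : GB φ B M) (a b : Ltr) (s t : List Ltr)
    (he : s ++ B a ++ t = B b ++ FreeGroup.invRev (B b)) :
    B a = B b ∨ B a = FreeGroup.invRev (B b) := by
  have hMpos := h.hM
  have hla : (B a).length = M := h.len a
  have hlb : (B b).length = M := h.len b
  have hlinv : (FreeGroup.invRev (B b)).length = M := by
    rw [FreeGroup.invRev_length, hlb]
  have hlen : s.length + M + t.length = 2 * M := by
    have := congrArg List.length he
    simp only [List.length_append, hla, hlb, hlinv] at this
    omega
  by_cases hs0 : s.length = 0
  · -- left case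
    left
    have hs : s = [] := List.length_eq_zero_iff.mp hs0
    subst hs
    rw [List.nil_append] at he
    have h1 := congrArg (List.take M) he
    rw [List.take_append_of_le_length (le_of_eq hla.symm), List.take_of_length_le (le_of_eq hla),
      List.take_append_of_le_length (le_of_eq hlb.symm),
      List.take_of_length_le (le_of_eq hlb)] at h1
    exact h1
  by_cases hsM : s.length = M
  · -- right case
    right
    have ht : t = [] := List.length_eq_zero_iff.mp (by omega)
    subst ht
    rw [List.append_nil] at he
    have h1 := congrArg (List.drop M) he
    rw [List.drop_append_of_le_length (le_of_eq hsM.symm),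
      List.drop_of_length_le (le_of_eq hsM), List.nil_append,
      List.drop_append_of_le_length (le_of_eq hlb.symm),
      List.drop_of_length_le (le_of_eq hlb), List.nil_append] at h1
    exact h1
  · -- middle case: contradiction
    exfalso
    have hsltM : s.length < M := by omega
    set j := s.length with hj
    have hij : ∀ n : ℕ, n < M → (B a)[n]? = (B b ++ FreeGroup.invRev (B b))[j + n]? := by
      intro n hn
      rw [← he, List.append_assoc, List.getElem?_append_right (by omega),
        Nat.add_sub_cancel_left, List.getElem?_append_left (by omega)]
    obtain ⟨z, hz⟩ : ∃ z, (B b)[M-1]? = some z := by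
      rw [List.getElem?_eq_getElem (by omega)]
      exact ⟨_, rfl⟩
    have h1 : (B a)[M-1-j]? = some z := by
      rw [hij (M-1-j) (by omega), show j + (M-1-j) = M - 1 by omega,
        List.getElem?_append_left (by omega), hz]
    have h2 : (B a)[(M-1-j)+1]? = some (z.1, !z.2) := by
      rw [show (M-1-j)+1 = M - j by omega, hij (M-j) (by omega), show j + (M-j) = M by omega,
        List.getElem?_append_right (by omega), show M - (B b).length = 0 by omega]
      show (FreeGroup.invRev (B b))[0]? = _
      unfold FreeGroup.invRev
      rw [List.getElem?_reverse (by simp [hlb]; omega),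
        show (List.map (fun g : Ltr => (g.1, !g.2)) (B b)).length - 1 - 0 = M - 1 by
          simp [hlb], List.getElem?_map, hz]
      rfl
    have hcontra := red_pair (h.block_red a) h1 h2
    apply hcontra
    cases z
    simp

end Fin

/-- If `a, b, c ∈ {x^{±1}, y^{±1}}` and `f_u(a)` occurs as a subword of the word
`f_u(b)f_u(c)`, then `f_u(a) = f_u(b)` or `f_u(a) = f_u(c)`.  Consequently, for
nontrivial reduced `α, β ∈ F₂`, if `f_u(α)` is a subword of `f_u(β)` then `α` is a
subword of `β`. -/
theorem Fw_block_alignment (u : List Bool) :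
    (∀ a b c : Bool × Bool,
      (FwLetter u a).toWord <:+: ((FwLetter u b).toWord ++ (FwLetter u c).toWord) →
      FwLetter u a = FwLetter u b ∨ FwLetter u a = FwLetter u c) ∧
    (∀ α β : FreeGroup Bool, α ≠ 1 →
      (Fw u α).toWord <:+: (Fw u β).toWord → α.toWord <:+: β.toWord) := by
  have h := GB_Fw u
  have hletter : ∀ ℓ : Ltr, (FwLetter u ℓ).toWord = Blk u ℓ := by
    intro ℓ
    have h1 := h.app [ℓ] (List.isChain_singleton ℓ)
    simpa [FwLetter] using h1
  constructor
  · intro a b c hinf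
    rw [hletter, hletter, hletter] at hinf
    obtain ⟨s, t, he⟩ := hinf
    by_cases hbc : b = (c.1, !c.2)
    · -- degenerate case : c = b⁻¹
      have hc : c = (b.1, !b.2) := by
        cases c
        simp only [hbc]
        simp
      have hmkinv : FreeGroup.mk [c] = (FreeGroup.mk [b])⁻¹ := by
        rw [FreeGroup.inv_mk]
        cases b
        simp [FreeGroup.invRev, hc]
      have hinv : Blk u c = FreeGroup.invRev (Blk u b) := by
        calc Blk u c = (FwLetter u c).toWord := (hletter c).symm
        _ = (Fw u ((FreeGroup.mk [b])⁻¹)).toWord := by rw [FwLetter, hmkinv]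
        _ = ((Fw u (FreeGroup.mk [b]))⁻¹).toWord := by rw [map_inv]
        _ = FreeGroup.invRev ((Fw u (FreeGroup.mk [b])).toWord) := FreeGroup.toWord_inv _
        _ = FreeGroup.invRev (Blk u b) := by rw [← hletter b]; rfl
      rw [hinv] at he
      rcases h.degenerate a b s t he with h1 | h1
      · left
        apply FreeGroup.toWord_injective
        rw [hletter, hletter]
        exact h1
      · right
        apply FreeGroup.toWord_injective
        rw [hletter, hletter, hinv]
        exact h1
    · rcases h.rigid a b c hbc s t he with ⟨-, rfl⟩ | ⟨-, rfl⟩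
      · left; rfl
      · right; rfl
  · intro α β hα hinf
    have h1 : (Fw u α).toWord = ((α.toWord.map (Blk u)).flatten) := by
      conv_lhs => rw [← FreeGroup.mk_toWord (x := α)]
      exact h.app _ (red_toWord α)
    have h2 : (Fw u β).toWord = ((β.toWord.map (Blk u)).flatten) := by
      conv_lhs => rw [← FreeGroup.mk_toWord (x := β)]
      exact h.app _ (red_toWord β)
    rw [h1, h2] at hinf
    obtain ⟨s, t, he⟩ := hinf
    have hne : α.toWord ≠ [] := fun hc => hα (FreeGroup.toWord_eq_nil_iff.mp hc)
    obtain ⟨w₁, w₂, hw, -, -⟩ :=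
      h.align α.toWord (red_toWord α) hne β.toWord (red_toWord β) s t he
    exact ⟨w₁, w₂, hw.symm⟩
end

section
/- With f_w the compositions of f_0(x)=x^5y, f_0(y)=y^5x, f_1(x)=x^2yxyx, f_1(y)=y^2xyxy on F_2: for any w ∈ 2^{<ℕ} and α, β ∈ F_2, if f_w(α) is a cyclic permutation of f_w(β), then α is a cyclic permutation of β. -/
/-- `h` is a cyclic permutation of `g` if their reduced words are `l₁l₂` and `l₂l₁`. -/
def IsCyclicPerm (g h : FreeGroup Bool) : Prop :=
  ∃ l₁ l₂ : List (Bool × Bool), g.toWord = l₁ ++ l₂ ∧ h.toWord = l₂ ++ l₁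

namespace CPProof

abbrev Letter := Bool × Bool

/-- The 6-letter block which is the image of a single letter under `f₀` (`b = false`)
or `f₁` (`b = true`). -/
def blk (b : Bool) (ℓ : Letter) : List Letter :=
  if b then
    match ℓ with
    | (false, true)  => [(false,true),(false,true),(true,true),(false,true),(true,true),(false,true)]
    | (true, true)   => [(true,true),(true,true),(false,true),(true,true),(false,true),(true,true)]
    | (false, false) => [(false,false),(true,false),(false,false),(true,false),(false,false),(false,false)]
    | (true, false)  => [(true,false),(false,false),(true,false),(false,false),(true,false),(true,false)]
  else
    match ℓ with
    | (false, true)  => [(false,true),(false,true),(false,true),(false,true),(false,true),(true,true)]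
    | (true, true)   => [(true,true),(true,true),(true,true),(true,true),(true,true),(false,true)]
    | (false, false) => [(true,false),(false,false),(false,false),(false,false),(false,false),(false,false)]
    | (true, false)  => [(false,false),(true,false),(true,false),(true,false),(true,false),(true,false)]

def Fb (b : Bool) : Monoid.End (FreeGroup Bool) := if b then F1 else F0

lemma Fb_single (b : Bool) (ℓ : Letter) :
    Fb b (FreeGroup.mk [ℓ]) = FreeGroup.mk (blk b ℓ) := by
  rcases ℓ with ⟨a, s⟩
  cases b <;> cases a <;> cases s <;>
    simp only [Fb, F0, F1, if_true, if_false, FreeGroup.lift_mk, List.map, List.prod_cons,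
      List.prod_nil, mul_one, cond, Fx, Fy, FreeGroup.of, FreeGroup.pow_mk, FreeGroup.mul_mk,
      FreeGroup.inv_mk, blk] <;> rfl

/-- Adjacent letters are not inverse to each other. -/
def Rel (p q : Letter) : Prop := ¬(p.1 = q.1 ∧ p.2 = !q.2)
instance : DecidableRel Rel := fun p q => inferInstanceAs (Decidable ¬(p.1 = q.1 ∧ p.2 = !q.2))

lemma reduce_eq_self_of_chain : ∀ {l : List Letter}, l.Chain' Rel → FreeGroup.reduce l = l := by
  intro l hl
  induction l with
  | nil => rfl
  | cons a l ih =>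
    have h2 := ih hl.tail
    rw [FreeGroup.reduce.cons, h2]
    cases l with
    | nil => rfl
    | cons c tl =>
      have hac : Rel a c := List.isChain_cons_cons.mp hl |>.1
      simp only [Rel] at hac
      simp [hac]

lemma chain_of_reduce_eq_self : ∀ {l : List Letter}, FreeGroup.reduce l = l → l.Chain' Rel := by
  intro l
  induction l with
  | nil => intro _; exact List.isChain_nil
  | cons a l ih =>
    intro h
    rw [FreeGroup.reduce.cons] at h
    rcases hr : FreeGroup.reduce l with _ | ⟨c, tl⟩
    · rw [hr] at h
      dsimp only at h
      injection h with _ h2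
      subst h2; exact List.isChain_singleton a
    · rw [hr] at h
      dsimp only at h
      by_cases hc : a.1 = c.1 ∧ a.2 = !c.2
      · rw [if_pos hc] at h
        have hlen : (FreeGroup.reduce l).length ≤ l.length :=
          FreeGroup.Red.length_le FreeGroup.reduce.red
        rw [hr] at hlen
        have := congrArg List.length h
        simp at this hlen
        omega
      · rw [if_neg hc] at h
        injection h with _ h3
        subst h3
        exact List.isChain_cons_cons.mpr ⟨hc, ih hr⟩

lemma chain_toWord (g : FreeGroup Bool) : g.toWord.Chain' Rel :=
  chain_of_reduce_eq_self (FreeGroup.reduce_toWord g)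

lemma blk_length (b : Bool) (ℓ : Letter) : (blk b ℓ).length = 6 := by
  rcases ℓ with ⟨a, s⟩; cases b <;> cases a <;> cases s <;> rfl

lemma blk_ne_nil (b : Bool) (ℓ : Letter) : blk b ℓ ≠ [] := by
  rcases ℓ with ⟨a, s⟩; cases b <;> cases a <;> cases s <;> simp [blk]

lemma blk_chain (b : Bool) (ℓ : Letter) : (blk b ℓ).Chain' Rel := by
  rcases ℓ with ⟨a, s⟩
  cases b <;> cases a <;> cases s <;>
    simp [blk, List.Chain', List.isChain_cons_cons, List.isChain_singleton, Rel]

lemma blk_compat (b : Bool) (a c : Letter) (h : Rel a c) :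
    Rel ((blk b a).getLast (blk_ne_nil b a)) ((blk b c).head (blk_ne_nil b c)) := by
  rcases a with ⟨a1, a2⟩; rcases c with ⟨c1, c2⟩
  revert h
  cases b <;> cases a1 <;> cases a2 <;> cases c1 <;> cases c2 <;> decide

lemma blk_inj : ∀ (b : Bool) (a c : Letter), blk b a = blk b c → a = c := by decide

lemma blk_no_overlap_fin : ∀ (b : Bool) (a c d : Letter) (r : Fin 6), r.val ≠ 0 →
    blk b d ≠ (blk b a).drop r.val ++ (blk b c).take r.val := by decide

lemma blk_no_overlap (b : Bool) (a c d : Letter) {r : ℕ} (h1 : 0 < r) (h2 : r < 6) :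
    blk b d ≠ (blk b a).drop r ++ (blk b c).take r :=
  blk_no_overlap_fin b a c d ⟨r, h2⟩ h1.ne'

lemma flatMap_chain (b : Bool) : ∀ {l : List Letter}, l.Chain' Rel →
    (l.flatMap (blk b)).Chain' Rel := by
  intro l hl
  induction l with
  | nil => exact List.isChain_nil
  | cons a l ih =>
    rw [List.flatMap_cons, List.Chain', List.isChain_append]
    refine ⟨blk_chain b a, ih hl.tail, ?_⟩
    intro p hp q hq
    cases l with
    | nil => simp at hq
    | cons c tl =>
      have hac : Rel a c := List.isChain_cons_cons.mp hl |>.1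
      have hp' : (blk b a).getLast (blk_ne_nil b a) = p := by
        rw [List.getLast?_eq_getLast (blk_ne_nil b a)] at hp
        simpa using hp
      have hq' : (blk b c).head (blk_ne_nil b c) = q := by
        rw [List.flatMap_cons, List.head?_append,
          List.head?_eq_head (blk_ne_nil b c)] at hq
        simpa using hq
      rw [← hp', ← hq']
      exact blk_compat b a c hac

lemma flatMap_length (b : Bool) (l : List Letter) :
    (l.flatMap (blk b)).length = 6 * l.length := by
  induction l with
  | nil => simp
  | cons a l ih => simp [List.flatMap_cons, ih, blk_length]; ring

lemma flatMap_inj (b : Bool) : ∀ (u v : List Letter),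
    u.flatMap (blk b) = v.flatMap (blk b) → u = v := by
  intro u
  induction u with
  | nil =>
    intro v h
    cases v with
    | nil => rfl
    | cons c v' =>
      exfalso
      rw [List.flatMap_nil, List.flatMap_cons] at h
      exact blk_ne_nil b c (List.append_eq_nil_iff.mp h.symm).1
  | cons a u' ih =>
    intro v h
    cases v with
    | nil =>
      exfalso
      rw [List.flatMap_nil, List.flatMap_cons] at h
      exact blk_ne_nil b a (List.append_eq_nil_iff.mp h).1
    | cons c v' =>
      rw [List.flatMap_cons, List.flatMap_cons] at h
      have hlen : (blk b a).length = (blk b c).length := by rw [blk_length, blk_length]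
      obtain ⟨h1, h2⟩ := List.append_inj h hlen
      rw [blk_inj b a c h1, ih v' h2]

lemma Fb_mk (b : Bool) : ∀ l : List Letter,
    Fb b (FreeGroup.mk l) = FreeGroup.mk (l.flatMap (blk b)) := by
  intro l
  induction l with
  | nil => rw [List.flatMap_nil, ← FreeGroup.one_eq_mk, map_one]
  | cons a l ih =>
    have : FreeGroup.mk (a :: l) = FreeGroup.mk [a] * FreeGroup.mk l := by
      rw [FreeGroup.mul_mk]; rfl
    rw [this, map_mul, Fb_single, ih, FreeGroup.mul_mk, List.flatMap_cons]

lemma toWord_Fb (b : Bool) (g : FreeGroup Bool) :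
    (Fb b g).toWord = g.toWord.flatMap (blk b) := by
  conv_lhs => rw [← FreeGroup.mk_toWord (x := g)]
  rw [Fb_mk, FreeGroup.toWord_mk,
    reduce_eq_self_of_chain (flatMap_chain b (chain_toWord g))]

lemma overlap_contra (b : Bool) (a c d : Letter) (r : ℕ) (h1 : 0 < r) (h2 : r < 6)
    (rest tail : List Letter)
    (h : blk b d ++ tail = (blk b a).drop r ++ (blk b c ++ rest)) : False := by
  apply blk_no_overlap b a c d h1 h2
  have h6 := congrArg (List.take 6) h
  rw [List.take_left' (blk_length b d), List.take_append,
    List.take_of_length_le (by rw [List.length_drop, blk_length]; omega),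
    List.length_drop, blk_length] at h6
  have hh : 6 - (6 - r) = r := by omega
  rw [hh, List.take_append, blk_length] at h6
  have hh2 : r - 6 = 0 := by omega
  rw [hh2, List.take_zero, List.append_nil] at h6
  exact h6

lemma core (b : Bool) (g h : FreeGroup Bool)
    (H : IsCyclicPerm (Fb b g) (Fb b h)) : IsCyclicPerm g h := by
  obtain ⟨l₁, l₂, h1, h2⟩ := H
  rw [toWord_Fb] at h1 h2
  unfold IsCyclicPerm
  obtain ⟨u, hu⟩ : ∃ u, g.toWord = u := ⟨_, rfl⟩
  obtain ⟨v, hv⟩ : ∃ v, h.toWord = v := ⟨_, rfl⟩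
  rw [hu] at h1
  rw [hv] at h2
  rw [hu, hv]
  clear hu hv
  set k := l₁.length with hk
  have hk6 : k ≤ 6 * u.length := by
    have := congrArg List.length h1
    rw [flatMap_length, List.length_append] at this
    omega
  by_cases hr : k % 6 = 0
  · -- aligned case
    set q := k / 6 with hq
    have hkq : k = 6 * q := by omega
    have hqle : q ≤ u.length := by omega
    have hlen1 : ((u.take q).flatMap (blk b)).length = k := by
      rw [flatMap_length, List.length_take]; omega
    have h1' : l₁ ++ l₂ = (u.take q).flatMap (blk b) ++ (u.drop q).flatMap (blk b) := by
      rw [← List.flatMap_append, List.take_append_drop]; exact h1.symm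
    obtain ⟨e1, e2⟩ := List.append_inj h1' hlen1.symm
    have h2' : v.flatMap (blk b) = ((u.drop q) ++ (u.take q)).flatMap (blk b) := by
      rw [List.flatMap_append, h2, e1, e2]
    exact ⟨u.take q, u.drop q, (List.take_append_drop q u).symm, flatMap_inj b _ _ h2'⟩
  · -- misaligned case: contradiction
    exfalso
    set q := k / 6 with hq
    set r := k % 6 with hrr
    have hr6 : r < 6 := Nat.mod_lt _ (by norm_num)
    have hrpos : 0 < r := Nat.pos_of_ne_zero hr
    have hkeq : k = 6 * q + r := (Nat.div_add_mod k 6).symm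
    have hqlt : q < u.length := by omega
    obtain ⟨u1, a, u2, hu', hlenu1⟩ :
        ∃ u1 a u2, u = u1 ++ a :: u2 ∧ u1.length = q :=
      ⟨u.take q, u[q], u.drop (q + 1),
        by rw [← List.drop_eq_getElem_cons hqlt, List.take_append_drop],
        by rw [List.length_take]; omega⟩
    have hlen1 : (u1.flatMap (blk b)).length = 6 * q := by
      rw [flatMap_length, hlenu1]
    have hW : u.flatMap (blk b)
        = u1.flatMap (blk b) ++ (blk b a ++ u2.flatMap (blk b)) := by
      rw [hu', List.flatMap_append, List.flatMap_cons]
    have e1 : l₁ = (u.flatMap (blk b)).take k := by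
      rw [h1, hk]; exact List.take_left.symm
    have e2 : l₂ = (u.flatMap (blk b)).drop k := by
      rw [h1, hk]; exact List.drop_left.symm
    have hkr : k - 6 * q = r := by omega
    have hrb : r - 6 = 0 := by omega
    have e1' : l₁ = u1.flatMap (blk b) ++ (blk b a).take r := by
      rw [e1, hW, List.take_append, hlen1, hkr,
        List.take_of_length_le (by rw [hlen1]; omega),
        List.take_append, blk_length, hrb, List.take_zero,
        List.append_nil]
    have e2' : l₂ = (blk b a).drop r ++ u2.flatMap (blk b) := by
      rw [e2, hW, List.drop_append, hlen1, hkr,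
        List.drop_eq_nil_of_le (by rw [hlen1]; omega),
        List.drop_append, blk_length, hrb, List.drop_zero,
        List.nil_append]
    rw [e1', e2'] at h2
    cases v with
    | nil =>
      have := congrArg List.length h2
      rw [List.flatMap_nil] at this
      simp only [List.length_nil, List.length_append, List.length_drop,
        List.length_take, blk_length, flatMap_length] at this
      omega
    | cons d v3 =>
      rw [List.flatMap_cons] at h2
      cases u2 with
      | cons c u4 =>
        simp only [List.flatMap_cons, List.append_assoc] at h2
        exact overlap_contra b a c d r hrpos hr6 _ _ h2
      | nil =>
        rw [List.flatMap_nil, List.append_nil] at h2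
        cases u1 with
        | cons c u4 =>
          simp only [List.flatMap_cons, List.append_assoc] at h2
          exact overlap_contra b a c d r hrpos hr6 _ _ h2
        | nil =>
          rw [List.flatMap_nil, List.nil_append] at h2
          apply blk_no_overlap b a a d hrpos hr6
          have h6 := congrArg (List.take 6) h2
          rw [List.take_left' (blk_length b d), List.take_append,
            List.take_of_length_le (by rw [List.length_drop, blk_length]; omega),
            List.length_drop, blk_length] at h6
          have hh : 6 - (6 - r) = r := by omega
          rw [hh, List.take_take, Nat.min_self] at h6
          exact h6

end CPProof

/-- If `f_w(α)` is a cyclic permutation of `f_w(β)`, then `α` is a cyclic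
permutation of `β`. -/
theorem Fw_cyclic_perm (w : List Bool) (α β : FreeGroup Bool)
    (h : IsCyclicPerm (Fw w α) (Fw w β)) : IsCyclicPerm α β := by
  induction w with
  | nil => exact h
  | cons b w ih =>
    apply ih
    exact CPProof.core b (Fw w α) (Fw w β) h
end

section
/- There are 2^{ℵ_0} many countable Borel quasi-orders, pairwise incomparable up to Borel bireducibility, each of whose symmetrizations is a universal countable Borel equivalence relation. Specifically, if E is a countable Borel equivalence relation on a standard Borel space X with Borel linear order ≤ and all E-classes of size at least 2, then the asymmetric quasi-order E(≤) = E ∩ ≤ satisfies: any Borel reduction from E(≤) ∨ E_∞ to F(≤) ∨ E_∞ (disjoint unions with a universal countable Borel equivalence relation E_∞) restricts to a Borel reduction from E(≤) to F(≤), and hence induces a Borel reduction from E to F; moreover the symmetrization of E(≤) ∨ E_∞ is Δ(X) ∨ E_∞, which is universal. -/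
/-- Borel reducibility of binary relations. -/
def BorelReducible {X Y : Type} [MeasurableSpace X] [MeasurableSpace Y]
    (Q : X → X → Prop) (Q' : Y → Y → Prop) : Prop :=
  ∃ f : X → Y, Measurable f ∧ ∀ a b : X, Q a b ↔ Q' (f a) (f b)

/-- Countable Borel equivalence relation. -/
def IsCBER {X : Type} [MeasurableSpace X] (E : X → X → Prop) : Prop :=
  Equivalence E ∧ MeasurableSet {p : X × X | E p.1 p.2} ∧ ∀ x, {y | E x y}.Countable

/-- Countable Borel quasi-order. -/
def IsCBQO {X : Type} [MeasurableSpace X] (Q : X → X → Prop) : Prop :=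
  Reflexive Q ∧ Transitive Q ∧ MeasurableSet {p : X × X | Q p.1 p.2} ∧
    ∀ x, {y | Q y x}.Countable

/-- A universal countable Borel equivalence relation. -/
def IsUnivCBER {Z : Type} [MeasurableSpace Z] (E : Z → Z → Prop) : Prop :=
  IsCBER E ∧ ∀ (Y : Type) [MeasurableSpace Y] [StandardBorelSpace Y]
    (F : Y → Y → Prop), IsCBER F → BorelReducible F E

/-- Disjoint union of two relations, on the disjoint union of the spaces. -/
def SumRel {X Z : Type} (R : X → X → Prop) (S : Z → Z → Prop) :
    X ⊕ Z → X ⊕ Z → Prop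
  | .inl a, .inl b => R a b
  | .inr a, .inr b => S a b
  | _, _ => False

open MeasureTheory

open MeasureTheory Classical in
lemma aqo_not_countable_cantor : ¬ Countable (ℕ → Bool) := by
  intro h
  have hinj : Function.Injective (fun s : Set ℕ => fun n => decide (n ∈ s)) := by
    intro s t hst
    ext n
    have := congrFun hst n
    simpa using this
  have h2 : Countable (Set ℕ) := hinj.countable
  obtain ⟨f, hf⟩ := exists_injective_nat (Set ℕ)
  exact Function.cantor_injective f hf

open MeasureTheory in
lemma aqo_measurableSet_diag (X : Type*) [MeasurableSpace X] [StandardBorelSpace X] :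
    MeasurableSet {p : X × X | p.1 = p.2} := by
  letI := upgradeStandardBorel X
  exact isClosed_diagonal.measurableSet


noncomputable def aqo_discEquiv {α β : Type*} [MeasurableSpace α] [MeasurableSpace β]
    [Countable α] [Countable β] [MeasurableSingletonClass α] [MeasurableSingletonClass β]
    (e : α ≃ β) : α ≃ᵐ β :=
  ⟨e, measurable_of_countable _, measurable_of_countable _⟩

noncomputable def aqo_equiv (Z : Type) [MeasurableSpace Z] [StandardBorelSpace Z]
    (hZ : ¬ Countable Z) : (ℕ → Bool) ≃ᵐ ((ℕ × ℕ × Bool) ⊕ Z) := by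
  classical
  set step : ℕ → (ℕ → Bool) := fun n => fun i => decide (i < n) with hstepdef
  have hstep : Function.Injective step := by
    intro n m h
    by_contra hne
    rcases Nat.lt_or_ge n m with hl | hge
    · have := congrFun h n; simp [step, hl] at this
    · have hlt : m < n := lt_of_le_of_ne hge (Ne.symm hne)
      have := congrFun h m; simp [step, hlt] at this
  set D : Set (ℕ → Bool) := Set.range step with hD
  have hDc : D.Countable := Set.countable_range step
  have hDm : MeasurableSet D := hDc.measurableSet
  have hInf : Infinite (ℕ × ℕ × Bool) := inferInstance
  haveI den : Denumerable (ℕ × ℕ × Bool) := Classical.choice (nonempty_denumerable _)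
  have eD : (D : Set (ℕ → Bool)) ≃ (ℕ × ℕ × Bool) :=
    (Equiv.ofInjective step hstep).symm.trans (Denumerable.eqv (ℕ × ℕ × Bool)).symm
  have hDcompl : ¬ Countable (↥(Dᶜ)) := by
    intro h
    have : Countable (ℕ → Bool) := by
      have : D ∪ Dᶜ = Set.univ := Set.union_compl_self D
      have hcu : (Set.univ : Set (ℕ → Bool)).Countable := by
        rw [← this]
        exact hDc.union (by simpa using Set.countable_coe_iff.mp h)
      exact Set.countable_univ_iff.mp hcu
    exact aqo_not_countable_cantor this
  haveI : StandardBorelSpace (↥(Dᶜ)) := hDm.compl.standardBorel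
  haveI : Countable (↥D) := hDc.to_subtype
  refine (MeasurableEquiv.sumCompl hDm).symm.trans (MeasurableEquiv.sumCongr ?_ ?_)
  · exact aqo_discEquiv eD
  · exact PolishSpace.measurableEquivOfNotCountable hDcompl hZ



/-- crown poset family on `ℕ × ℕ × Bool`, one crown (cycle) of size `2*(n+3)` for each `n ∈ U`. -/
def CrownP (U : Set ℕ) (x y : ℕ × ℕ × Bool) : Prop :=
  x = y ∨ (x.1 = y.1 ∧ x.1 ∈ U ∧ x.2.2 = false ∧ y.2.2 = true ∧
    x.2.1 < x.1 + 3 ∧ y.2.1 < x.1 + 3 ∧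
    (y.2.1 = x.2.1 ∨ y.2.1 = x.2.1 + 1 ∨ (x.2.1 = x.1 + 2 ∧ y.2.1 = 0)))

lemma crownP_refl (U : Set ℕ) (x : ℕ × ℕ × Bool) : CrownP U x x := Or.inl rfl

lemma crownP_trans (U : Set ℕ) {x y z : ℕ × ℕ × Bool} (h1 : CrownP U x y) (h2 : CrownP U y z) :
    CrownP U x z := by
  rcases h1 with rfl | h1
  · exact h2
  rcases h2 with rfl | h2
  · exact Or.inr h1
  exact absurd h2.2.2.1 (by rw [h1.2.2.2.1]; simp)

lemma crownP_antisymm (U : Set ℕ) {x y : ℕ × ℕ × Bool} (h1 : CrownP U x y) (h2 : CrownP U y x) :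
    x = y := by
  rcases h1 with rfl | h1
  · rfl
  rcases h2 with h | h2
  · exact h.symm
  exact absurd h2.2.2.1 (by rw [h1.2.2.2.1]; simp)

lemma crownP_not_rev {V : Set ℕ} {M p q : ℕ} (h : CrownP V (M, p, false) (M, q, true)) :
    ¬ CrownP V (M, q, true) (M, p, false) := by
  intro h2
  rcases h2 with h2 | h2
  · simp at h2
  · simp at h2

lemma crownP_strict_shape {V : Set ℕ} {u w : ℕ × ℕ × Bool}
    (h : CrownP V u w) (h2 : ¬ CrownP V w u) :
    u.1 = w.1 ∧ u.1 ∈ V ∧ u.2.2 = false ∧ w.2.2 = true ∧ u.2.1 < u.1 + 3 ∧ w.2.1 < u.1 + 3 := by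
  rcases h with rfl | h
  · exact absurd (crownP_refl V u) h2
  exact ⟨h.1, h.2.1, h.2.2.1, h.2.2.2.1, h.2.2.2.2.1, h.2.2.2.2.2.1⟩

lemma crownP_adj {V : Set ℕ} {M p q : ℕ} (h : CrownP V (M, p, false) (M, q, true))
    (hq : q < M + 3) :
    (q = p ∨ q = (if p = M + 2 then 0 else p + 1)) ∧
    (p = q ∨ p = (if q = 0 then M + 2 else q - 1)) := by
  rcases h with h | h
  · simp at h
  obtain ⟨-, -, -, -, hp3, -, hadj⟩ := h
  simp only at hadj hp3
  rcases hadj with h | h | ⟨h1, h2⟩ <;>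
    constructor <;> [skip; skip; skip; skip; skip; skip] <;>
    · split <;> omega

lemma crownP_mk {V : Set ℕ} {M p q : ℕ} (hM : M ∈ V) (hp : p < M + 3) (hq : q < M + 3)
    (hadj : q = p ∨ q = p + 1 ∨ (p = M + 2 ∧ q = 0)) :
    CrownP V (M, p, false) (M, q, true) :=
  Or.inr ⟨rfl, hM, rfl, rfl, hp, hq, hadj⟩

/-- any subset of `[0, M')` containing a point and closed under cyclic successor is all of it -/
lemma aqo_cyc_closure {M' : ℕ} (S : Set ℕ)
    (hstep : ∀ j ∈ S, j < M' → (if j = M' - 1 then 0 else j + 1) ∈ S)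
    {k : ℕ} (hk : k ∈ S) (hkM : k < M') : ∀ j, j < M' → j ∈ S := by
  have up : ∀ k₀, k₀ ∈ S → ∀ d, k₀ + d < M' → k₀ + d ∈ S := by
    intro k₀ hk₀ d
    induction d with
    | zero => intro _; simpa using hk₀
    | succ d ih =>
      intro h
      have hd : k₀ + d < M' := by omega
      have := hstep _ (ih hd) hd
      rw [if_neg (by omega)] at this
      simpa [Nat.add_assoc] using this
  have hm : M' - 1 ∈ S := by
    have := up k hk (M' - 1 - k) (by omega)
    have he : k + (M' - 1 - k) = M' - 1 := by omega
    rwa [he] at this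
  have h0 : 0 ∈ S := by
    have := hstep _ hm (by omega)
    rwa [if_pos rfl] at this
  intro j hj
  have := up 0 h0 j (by omega)
  simpa using this



lemma aqo_me_inl {α β : Type} [MeasurableSpace α] [MeasurableSpace β] :
    MeasurableEmbedding (@Sum.inl α β) :=
  ⟨Sum.inl_injective, measurable_inl, fun _ hs => hs.inl_image⟩

lemma aqo_me_inr {α β : Type} [MeasurableSpace α] [MeasurableSpace β] :
    MeasurableEmbedding (@Sum.inr α β) :=
  ⟨Sum.inr_injective, measurable_inr, fun _ hs => hs.inr_image⟩

lemma aqo_sumRel_measurable {α β : Type} [MeasurableSpace α] [MeasurableSpace β]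
    {R : α → α → Prop} {S : β → β → Prop}
    (hR : MeasurableSet {p : α × α | R p.1 p.2}) (hS : MeasurableSet {p : β × β | S p.1 p.2}) :
    MeasurableSet {p : (α ⊕ β) × (α ⊕ β) | SumRel R S p.1 p.2} := by
  have e1 : MeasurableEmbedding (fun p : α × α => ((Sum.inl p.1 : α ⊕ β), (Sum.inl p.2 : α ⊕ β))) :=
    aqo_me_inl.prodMap aqo_me_inl
  have e2 : MeasurableEmbedding (fun p : β × β => ((Sum.inr p.1 : α ⊕ β), (Sum.inr p.2 : α ⊕ β))) :=
    aqo_me_inr.prodMap aqo_me_inr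
  have : {p : (α ⊕ β) × (α ⊕ β) | SumRel R S p.1 p.2} =
      (fun p : α × α => ((Sum.inl p.1 : α ⊕ β), (Sum.inl p.2 : α ⊕ β))) '' {p | R p.1 p.2} ∪
      (fun p : β × β => ((Sum.inr p.1 : α ⊕ β), (Sum.inr p.2 : α ⊕ β))) '' {p | S p.1 p.2} := by
    ext ⟨p, q⟩
    cases p <;> cases q <;>
      simp [SumRel, Set.mem_image, Prod.ext_iff] <;> aesop
  rw [this]
  exact (e1.measurableSet_image.2 hR).union (e2.measurableSet_image.2 hS)

lemma sumRel_refl {X Z : Type} {R : X → X → Prop} {S : Z → Z → Prop}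
    (hR : ∀ x, R x x) (hS : ∀ z, S z z) : ∀ p, SumRel R S p p := by
  intro p; cases p with
  | inl a => exact hR a
  | inr z => exact hS z

lemma aqo_crown_no_embed {Z : Type} {Einf : Z → Z → Prop}
    (hsym : ∀ a b, Einf a b → Einf b a) (hrefl : ∀ a, Einf a a)
    {U V : Set ℕ} {n : ℕ} (hnU : n ∈ U) (hnV : n ∉ V)
    (g : ((ℕ × ℕ × Bool) ⊕ Z) → ((ℕ × ℕ × Bool) ⊕ Z))
    (hg : ∀ p q, SumRel (CrownP U) Einf p q ↔ SumRel (CrownP V) Einf (g p) (g q)) : False := by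
  classical
  set L := n + 3 with hL
  -- source vertices
  set av : ℕ → (ℕ × ℕ × Bool) := fun i => (n, i, false) with hav
  set bv : ℕ → (ℕ × ℕ × Bool) := fun i => (n, i, true) with hbv
  set nxtL : ℕ → ℕ := fun i => if i = n + 2 then 0 else i + 1 with hnxtL
  set prvL : ℕ → ℕ := fun i => if i = 0 then n + 2 else i - 1 with hprvL
  have hnxtL_lt : ∀ i, i < L → nxtL i < L := by intro i h; simp only [hnxtL]; split <;> omega
  have hprvL_lt : ∀ i, i < L → prvL i < L := by intro i h; simp only [hprvL]; split <;> omega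
  -- injectivity of g on inl
  have ginj : ∀ x y : ℕ × ℕ × Bool, g (Sum.inl x) = g (Sum.inl y) → x = y := by
    intro x y h
    have h1 : CrownP U x y := by
      rw [show (CrownP U x y) = SumRel (CrownP U) Einf (Sum.inl x) (Sum.inl y) from rfl, hg, h]
      exact sumRel_refl (crownP_refl V) hrefl _
    have h2 : CrownP U y x := by
      rw [show (CrownP U y x) = SumRel (CrownP U) Einf (Sum.inl y) (Sum.inl x) from rfl, hg, h]
      exact sumRel_refl (crownP_refl V) hrefl _
    exact crownP_antisymm U h1 h2
  -- strict pairs map to strict crown pairs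
  have hstrict : ∀ x y : ℕ × ℕ × Bool, CrownP U x y → ¬ CrownP U y x →
      ∃ m p q, m ∈ V ∧ p < m + 3 ∧ q < m + 3 ∧
        g (Sum.inl x) = Sum.inl (m, p, false) ∧ g (Sum.inl y) = Sum.inl (m, q, true) ∧
        CrownP V (m, p, false) (m, q, true) := by
    intro x y hxy hyx
    have h1 : SumRel (CrownP V) Einf (g (Sum.inl x)) (g (Sum.inl y)) := (hg _ _).1 hxy
    have h2 : ¬ SumRel (CrownP V) Einf (g (Sum.inl y)) (g (Sum.inl x)) :=
      fun h => hyx ((hg _ _).2 h)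
    rcases hgx : g (Sum.inl x) with u | z <;> rcases hgy : g (Sum.inl y) with w | z'
    · rw [hgx, hgy] at h1 h2
      have h1' : CrownP V u w := h1
      have h2' : ¬ CrownP V w u := h2
      obtain ⟨u1, u2, u3⟩ := u
      obtain ⟨w1, w2, w3⟩ := w
      obtain ⟨he1, hm, hbu, hbw, hpu, hpw⟩ := crownP_strict_shape h1' h2'
      simp only at he1 hm hbu hbw hpu hpw
      subst he1 hbu hbw
      exact ⟨u1, u2, w2, hm, hpu, hpw, rfl, rfl, h1'⟩
    · rw [hgx, hgy] at h1; exact absurd h1 (by simp [SumRel])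
    · rw [hgx, hgy] at h1; exact absurd h1 (by simp [SumRel])
    · rw [hgx, hgy] at h1 h2
      exact (h2 (hsym _ _ h1)).elim
  -- source strict pairs
  have hsrc1 : ∀ i, i < L → CrownP U (av i) (bv i) :=
    fun i hi => crownP_mk hnU hi hi (Or.inl rfl)
  have hsrc2 : ∀ i, i < L → CrownP U (av i) (bv (nxtL i)) := by
    intro i hi
    refine crownP_mk hnU hi (hnxtL_lt i hi) ?_
    simp only [hnxtL]; split <;> omega
  have hsrc3 : ∀ j, j < L → CrownP U (av (prvL j)) (bv j) := by
    intro j hj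
    refine crownP_mk hnU (hprvL_lt j hj) hj ?_
    simp only [hprvL]; split <;> omega
  have hnotrev : ∀ i j, ¬ CrownP U (bv j) (av i) := by
    intro i j h
    rcases h with h | h
    · simp [hav, hbv] at h
    · simp [hav, hbv] at h
  -- skolemize the images of the standard strict pairs (av i, bv i)
  have hpairs : ∀ i : ℕ, ∃ m p q, (i < L → m ∈ V ∧ p < m + 3 ∧ q < m + 3 ∧
      g (Sum.inl (av i)) = Sum.inl (m, p, false) ∧ g (Sum.inl (bv i)) = Sum.inl (m, q, true)) := by
    intro i
    by_cases hi : i < L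
    · obtain ⟨m, p, q, h⟩ := hstrict (av i) (bv i) (hsrc1 i hi) (hnotrev i i)
      exact ⟨m, p, q, fun _ => ⟨h.1, h.2.1, h.2.2.1, h.2.2.2.1, h.2.2.2.2.1⟩⟩
    · exact ⟨0, 0, 0, fun h => absurd h hi⟩
  choose mf pf qf hmain using hpairs
  -- all crowns agree
  have hconst : ∀ i, i < L → mf i = mf 0 := by
    intro i
    induction i with
    | zero => intro _; rfl
    | succ i ih =>
      intro hi
      have hi' : i < L := by omega
      -- strict pair (av i, bv (i+1))
      obtain ⟨m, p, q, hm, hp, hq, hgx, hgy, hrel⟩ :=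
        hstrict (av i) (bv (i + 1)) (by
          have := hsrc2 i hi'
          have hne : i ≠ n + 2 := by omega
          simpa only [hnxtL, if_neg hne] using this) (hnotrev i (i + 1))
      obtain ⟨-, -, -, hgx', hgy'⟩ := hmain i hi'
      obtain ⟨-, -, -, -, hgy''⟩ := hmain (i + 1) hi
      rw [hgx'] at hgx
      rw [hgy''] at hgy
      have e1 : mf i = m := by
        have := Sum.inl.inj hgx; exact (Prod.ext_iff.1 this).1
      have e2 : mf (i + 1) = m := by
        have := Sum.inl.inj hgy; exact (Prod.ext_iff.1 this).1
      rw [e1] at ih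
      rw [e2, ← ih hi']
  set M := mf 0 with hM
  have hML : ∀ i, i < L → mf i = M := hconst
  have hMV : M ∈ V := by
    have := (hmain 0 (by omega)).1
    rwa [hML 0 (by omega)] at this
  have hnM : n ≠ M := fun h => hnV (h ▸ hMV)
  set nxt' : ℕ → ℕ := fun r => if r = M + 2 then 0 else r + 1 with hnxt'
  -- bounds
  have hpb : ∀ i, i < L → pf i < M + 3 := by
    intro i hi; have := (hmain i hi).2.1; rwa [hML i hi] at this
  have hqb : ∀ i, i < L → qf i < M + 3 := by
    intro i hi; have := (hmain i hi).2.2.1; rwa [hML i hi] at this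
  have hga : ∀ i, i < L → g (Sum.inl (av i)) = Sum.inl (M, pf i, false) := by
    intro i hi; have := (hmain i hi).2.2.2.1; rwa [hML i hi] at this
  have hgb : ∀ i, i < L → g (Sum.inl (bv i)) = Sum.inl (M, qf i, true) := by
    intro i hi; have := (hmain i hi).2.2.2.2; rwa [hML i hi] at this
  -- transfer of comparabilities
  have htrans : ∀ i j, i < L → j < L → CrownP U (av i) (bv j) →
      CrownP V (M, pf i, false) (M, qf j, true) := by
    intro i j hi hj h
    have := (hg (Sum.inl (av i)) (Sum.inl (bv j))).1 h
    rwa [hga i hi, hgb j hj] at this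
  -- distinctness
  have hqdist : ∀ i j, i < L → j < L → i ≠ j → qf i ≠ qf j := by
    intro i j hi hj hne he
    apply hne
    have : g (Sum.inl (bv i)) = g (Sum.inl (bv j)) := by rw [hgb i hi, hgb j hj, he]
    have := ginj _ _ this
    simpa [hbv, Prod.ext_iff] using this
  have hpdist : ∀ i j, i < L → j < L → i ≠ j → pf i ≠ pf j := by
    intro i j hi hj hne he
    apply hne
    have : g (Sum.inl (av i)) = g (Sum.inl (av j)) := by rw [hga i hi, hga j hj, he]
    have := ginj _ _ this
    simpa [hav, Prod.ext_iff] using this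
  -- the a-side neighbour argument : nxt' (pf i) is attained by qf
  have hstepa : ∀ i, i < L → ∃ j, j < L ∧ qf j = nxt' (pf i) := by
    intro i hi
    have h1 := (crownP_adj (htrans i i hi hi (hsrc1 i hi)) (hqb i hi)).1
    have h2 := (crownP_adj (htrans i (nxtL i) hi (hnxtL_lt i hi) (hsrc2 i hi))
      (hqb (nxtL i) (hnxtL_lt i hi))).1
    have hne : qf i ≠ qf (nxtL i) := by
      apply hqdist i (nxtL i) hi (hnxtL_lt i hi)
      simp only [hnxtL]; split <;> omega
    rcases h1 with h1 | h1
    · rcases h2 with h2 | h2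
      · exact absurd (h1.trans h2.symm) hne
      · exact ⟨nxtL i, hnxtL_lt i hi, h2⟩
    · exact ⟨i, hi, h1⟩
  -- the b-side neighbour argument : qf j is attained by pf
  have hstepb : ∀ j, j < L → ∃ i, i < L ∧ pf i = qf j := by
    intro j hj
    have h1 := (crownP_adj (htrans j j hj hj (hsrc1 j hj)) (hqb j hj)).2
    have h2 := (crownP_adj (htrans (prvL j) j (hprvL_lt j hj) hj (hsrc3 j hj)) (hqb j hj)).2
    have hne : pf j ≠ pf (prvL j) := by
      apply hpdist j (prvL j) hj (hprvL_lt j hj)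
      simp only [hprvL]; split <;> omega
    rcases h1 with h1 | h1
    · exact ⟨j, hj, h1⟩
    · rcases h2 with h2 | h2
      · exact ⟨prvL j, hprvL_lt j hj, h2⟩
      · exact absurd (h1.trans h2.symm) hne
  -- closure: every residue < M+3 is attained by pf
  have hall : ∀ r, r < M + 3 → r ∈ {r | ∃ i, i < L ∧ pf i = r} := by
    apply aqo_cyc_closure (M' := M + 3)
    · rintro r ⟨i, hi, rfl⟩ _
      obtain ⟨j, hj, hqj⟩ := hstepa i hi
      obtain ⟨i', hi', hpi'⟩ := hstepb j hj
      refine ⟨i', hi', ?_⟩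
      rw [hpi', hqj]
      simp only [hnxt']
      norm_num
    · exact ⟨0, by omega, rfl⟩
    · exact hpb 0 (by omega)
  -- cardinality contradiction
  have hinj2 : L ≤ M + 3 := by
    have := Finset.card_le_card_of_injOn pf
      (fun i hi => by
        simp only [Finset.coe_range, Set.mem_Iio] at *
        exact hpb i hi)
      (fun i hi j hj he => by
        simp only [Finset.coe_range, Set.mem_Iio] at hi hj
        by_contra hne
        exact hpdist i j hi hj hne he)
      (s := Finset.range L) (t := Finset.range (M + 3))
    simpa using this
  have hsurj2 : M + 3 ≤ L := by
    have hsub : Finset.range (M + 3) ⊆ (Finset.range L).image pf := by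
      intro r hr
      simp only [Finset.mem_range] at hr
      obtain ⟨i, hi, hpi⟩ := hall r hr
      simp only [Finset.mem_image, Finset.mem_range]
      exact ⟨i, hi, hpi⟩
    calc M + 3 = (Finset.range (M + 3)).card := by simp
      _ ≤ ((Finset.range L).image pf).card := Finset.card_le_card hsub
      _ ≤ (Finset.range L).card := Finset.card_image_le
      _ = L := by simp
  omega

def aqoStar (S : Set ℕ) : Set ℕ :=
  {k | (∃ m ∈ S, k = 2 * m) ∨ (∃ m, m ∉ S ∧ k = 2 * m + 1)}

lemma aqoStar_diff {S T : Set ℕ} (h : S ≠ T) : ∃ n, n ∈ aqoStar S ∧ n ∉ aqoStar T := by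
  have : ∃ m, ¬ (m ∈ S ↔ m ∈ T) := by
    by_contra hc
    push_neg at hc
    exact h (Set.ext fun m => hc m)
  obtain ⟨m, hm⟩ := this
  by_cases hmS : m ∈ S
  · have hmT : m ∉ T := fun ht => hm ⟨fun _ => ht, fun _ => hmS⟩
    refine ⟨2 * m, Or.inl ⟨m, hmS, rfl⟩, ?_⟩
    rintro (⟨m', hm', he⟩ | ⟨m', hm', he⟩)
    · have : m' = m := by omega
      exact hmT (this ▸ hm')
    · omega
  · have hmT : m ∈ T := by
      by_contra hmT
      exact hm ⟨fun hs => absurd hs hmS, fun ht => absurd ht hmT⟩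
    refine ⟨2 * m + 1, Or.inr ⟨m, hmS, rfl⟩, ?_⟩
    rintro (⟨m', hm', he⟩ | ⟨m', hm', he⟩)
    · omega
    · have : m' = m := by omega
      exact hm' (this ▸ hmT)

lemma sumRel_trans {X Z : Type} {R : X → X → Prop} {S : Z → Z → Prop}
    (hR : ∀ {x y z}, R x y → R y z → R x z) (hS : ∀ {x y z}, S x y → S y z → S x z) :
    ∀ {p q r}, SumRel R S p q → SumRel R S q r → SumRel R S p r := by
  intro p q r h1 h2
  cases p <;> cases q <;> cases r <;> simp_all [SumRel]
  · exact hR h1 h2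
  · exact hS h1 h2

lemma aqo_part1 (Z : Type) [MeasurableSpace Z] [StandardBorelSpace Z]
    (Einf : Z → Z → Prop) (hEinf : IsUnivCBER Einf) :
    ∃ Q : Set ℕ → ((ℕ → Bool) → (ℕ → Bool) → Prop),
      (∀ i, IsCBQO (Q i)) ∧ (∀ i j, i ≠ j → ¬ BorelReducible (Q i) (Q j)) ∧
      (∀ i, IsUnivCBER (fun a b => Q i a b ∧ Q i b a)) := by
  classical
  obtain ⟨⟨hEq, hEmeas, hEcnt⟩, huniv⟩ := hEinf
  -- Z is uncountable
  have hZnc : ¬ Countable Z := by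
    have hid : IsCBER (fun a b : (ℕ → Bool) => a = b) := by
      refine ⟨eq_equivalence, aqo_measurableSet_diag _, fun x => ?_⟩
      have : {y | x = y} ⊆ {x} := by intro y hy; simp_all [Set.mem_setOf_eq]
      exact Set.Countable.mono this (Set.countable_singleton x)
    obtain ⟨f, hfm, hf⟩ := huniv (ℕ → Bool) (fun a b => a = b) hid
    have hfi : Function.Injective f := by
      intro a b hab
      exact (hf a b).2 (hab ▸ hEq.refl (f a))
    intro hZc
    exact aqo_not_countable_cantor hfi.countable
  set e := aqo_equiv Z hZnc with he
  refine ⟨fun S a b => SumRel (CrownP (aqoStar S)) Einf (e a) (e b), ?_, ?_, ?_⟩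
  · -- IsCBQO
    intro S
    refine ⟨fun a => sumRel_refl (crownP_refl _) hEq.refl _,
      fun a b c h1 h2 => sumRel_trans (R := CrownP (aqoStar S)) (S := Einf)
        (fun h1 h2 => crownP_trans _ h1 h2) (fun h1 h2 => hEq.trans h1 h2) h1 h2,
      ?_, ?_⟩
    · have hgr : MeasurableSet {p : ((ℕ × ℕ × Bool) ⊕ Z) × ((ℕ × ℕ × Bool) ⊕ Z) |
          SumRel (CrownP (aqoStar S)) Einf p.1 p.2} :=
        aqo_sumRel_measurable (Set.to_countable _).measurableSet hEmeas
      have : {p : (ℕ → Bool) × (ℕ → Bool) | SumRel (CrownP (aqoStar S)) Einf (e p.1) (e p.2)} =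
          (fun p : (ℕ → Bool) × (ℕ → Bool) => (e p.1, e p.2)) ⁻¹'
          {p | SumRel (CrownP (aqoStar S)) Einf p.1 p.2} := rfl
      rw [this]
      exact hgr.preimage ((e.measurable.comp measurable_fst).prodMk
        (e.measurable.comp measurable_snd))
    · intro x
      have : {y | SumRel (CrownP (aqoStar S)) Einf (e y) (e x)} =
          e ⁻¹' {w | SumRel (CrownP (aqoStar S)) Einf w (e x)} := rfl
      rw [this]
      apply Set.Countable.preimage _ e.injective
      rcases hex : e x with a | z
      · apply Set.Countable.mono (s₁ := {w | SumRel (CrownP (aqoStar S)) Einf w (Sum.inl a)})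
          (s₂ := Set.range (Sum.inl : (ℕ × ℕ × Bool) → _)) ?_ (Set.countable_range _)
        intro w hw
        cases w with
        | inl b => exact ⟨b, rfl⟩
        | inr z => exact absurd hw (by simp [SumRel, Set.mem_setOf_eq])
      · apply Set.Countable.mono (s₁ := {w | SumRel (CrownP (aqoStar S)) Einf w (Sum.inr z)})
          (s₂ := Sum.inr '' {w | Einf z w}) ?_
          (Set.Countable.image (hEcnt z) _)
        intro w hw
        cases w with
        | inl b => exact absurd hw (by simp [SumRel, Set.mem_setOf_eq])
        | inr z' => exact ⟨z', hEq.symm hw, rfl⟩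
  · -- pairwise non reducible
    intro S T hST ⟨f, hfm, hf⟩
    obtain ⟨n, hnS, hnT⟩ := aqoStar_diff hST
    apply aqo_crown_no_embed (Einf := Einf) (U := aqoStar S) (V := aqoStar T)
      (fun a b h => hEq.symm h) hEq.refl hnS hnT (fun p => e (f (e.symm p)))
    intro p q
    have := hf (e.symm p) (e.symm q)
    simpa [MeasurableEquiv.apply_symm_apply] using this
  · -- symmetrization universal
    intro S
    constructor
    · refine ⟨⟨fun a => ⟨sumRel_refl (crownP_refl _) hEq.refl _,
          sumRel_refl (crownP_refl _) hEq.refl _⟩,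
        fun h => ⟨h.2, h.1⟩,
        fun h1 h2 => ⟨sumRel_trans (R := CrownP (aqoStar S)) (S := Einf)
            (fun a b => crownP_trans _ a b) (fun a b => hEq.trans a b) h1.1 h2.1,
          sumRel_trans (R := CrownP (aqoStar S)) (S := Einf)
            (fun a b => crownP_trans _ a b) (fun a b => hEq.trans a b) h2.2 h1.2⟩⟩, ?_, ?_⟩
      · have hgr : MeasurableSet {p : ((ℕ × ℕ × Bool) ⊕ Z) × ((ℕ × ℕ × Bool) ⊕ Z) |
            SumRel (CrownP (aqoStar S)) Einf p.1 p.2} :=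
          aqo_sumRel_measurable (Set.to_countable _).measurableSet hEmeas
        have hm1 : Measurable (fun p : (ℕ → Bool) × (ℕ → Bool) => (e p.1, e p.2)) :=
          (e.measurable.comp measurable_fst).prodMk (e.measurable.comp measurable_snd)
        have hm2 : Measurable (fun p : (ℕ → Bool) × (ℕ → Bool) => (e p.2, e p.1)) :=
          (e.measurable.comp measurable_snd).prodMk (e.measurable.comp measurable_fst)
        exact (hgr.preimage hm1).inter (hgr.preimage hm2)
      · intro x
        apply Set.Countable.mono (s₂ := {y | SumRel (CrownP (aqoStar S)) Einf (e y) (e x)})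
          (fun y hy => hy.2)
        have : {y | SumRel (CrownP (aqoStar S)) Einf (e y) (e x)} =
            e ⁻¹' {w | SumRel (CrownP (aqoStar S)) Einf w (e x)} := rfl
        rw [this]
        apply Set.Countable.preimage _ e.injective
        rcases hex : e x with a | z
        · apply Set.Countable.mono (s₂ := Set.range (Sum.inl : (ℕ × ℕ × Bool) → _)) ?_
            (Set.countable_range _)
          intro w hw
          cases w with
          | inl b => exact ⟨b, rfl⟩
          | inr z => exact absurd hw (by simp [SumRel, Set.mem_setOf_eq])
        · apply Set.Countable.mono (s₂ := Sum.inr '' {w | Einf z w}) ?_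
            (Set.Countable.image (hEcnt z) _)
          intro w hw
          cases w with
          | inl b => exact absurd hw (by simp [SumRel, Set.mem_setOf_eq])
          | inr z' => exact ⟨z', hEq.symm hw, rfl⟩
    · intro Y _ _ F hF
      obtain ⟨f₀, hf₀m, hf₀⟩ := huniv Y F hF
      refine ⟨fun y => e.symm (Sum.inr (f₀ y)),
        e.symm.measurable.comp (measurable_inr.comp hf₀m), ?_⟩
      intro a b
      have h1 : e (e.symm (Sum.inr (f₀ a))) = Sum.inr (f₀ a) := e.apply_symm_apply _
      have h2 : e (e.symm (Sum.inr (f₀ b))) = Sum.inr (f₀ b) := e.apply_symm_apply _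
      rw [hf₀ a b]
      simp only [h1, h2]
      constructor
      · intro h
        exact ⟨h, hEq.symm h⟩
      · intro h
        exact h.1

/-- There are `2^{ℵ₀}` countable Borel quasi-orders, pairwise incomparable under Borel
reducibility, each of whose symmetrizations is a universal countable Borel equivalence
relation.  Specifically, for `E` a countable Borel equivalence relation with Borel
linear order `≤` and all classes of size at least `2`: any Borel reduction from
`E(≤) ∨ E_∞` to `F(≤') ∨ E_∞` restricts to a Borel reduction of `E(≤) = E ∩ ≤` to
`F(≤')`, hence induces a Borel reduction of `E` to `F`; the symmetrization of
`E(≤) ∨ E_∞` is `Δ(X) ∨ E_∞`; and `Δ(X) ∨ E_∞` is universal. -/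
theorem asymmetric_quasiOrders_symmetrizing_to_universal
    (X X' Z : Type) [MeasurableSpace X] [StandardBorelSpace X]
    [MeasurableSpace X'] [StandardBorelSpace X']
    [MeasurableSpace Z] [StandardBorelSpace Z]
    (E : X → X → Prop) (le : X → X → Prop)
    (F : X' → X' → Prop) (le' : X' → X' → Prop)
    (Einf : Z → Z → Prop)
    (hE : IsCBER E) (hF : IsCBER F)
    (hle : IsLinearOrder X (fun a b => le a b))
    (hle' : IsLinearOrder X' (fun a b => le' a b))
    (hleB : MeasurableSet {p : X × X | le p.1 p.2})
    (hle'B : MeasurableSet {p : X' × X' | le' p.1 p.2})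
    (hE2 : ∀ x : X, ∃ y : X, y ≠ x ∧ E x y)
    (hF2 : ∀ x : X', ∃ y : X', y ≠ x ∧ F x y)
    (hEinf : IsUnivCBER Einf) :
    -- the "2^{ℵ₀} pairwise incomparable" headline
    (∃ Q : Set ℕ → ((ℕ → Bool) → (ℕ → Bool) → Prop),
      (∀ i, IsCBQO (Q i)) ∧
      (∀ i j, i ≠ j → ¬ BorelReducible (Q i) (Q j)) ∧
      (∀ i, IsUnivCBER (fun a b => Q i a b ∧ Q i b a))) ∧
    -- any Borel reduction of `E(≤) ∨ E_∞` to `F(≤') ∨ E_∞` restricts to `X`,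
    -- giving a Borel reduction of `E(≤)` to `F(≤')` and hence of `E` to `F`
    (∀ f : X ⊕ Z → X' ⊕ Z, Measurable f →
      (∀ p q : X ⊕ Z,
        SumRel (fun a b => E a b ∧ le a b) Einf p q ↔
        SumRel (fun a b => F a b ∧ le' a b) Einf (f p) (f q)) →
      ∃ g : X → X', Measurable g ∧ (∀ x : X, f (Sum.inl x) = Sum.inl (g x)) ∧
        (∀ a b : X, (E a b ∧ le a b) ↔ (F (g a) (g b) ∧ le' (g a) (g b))) ∧
        (∀ a b : X, E a b ↔ F (g a) (g b))) ∧
    -- the symmetrization of `E(≤) ∨ E_∞` is `Δ(X) ∨ E_∞`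
    (∀ p q : X ⊕ Z,
      (SumRel (fun a b => E a b ∧ le a b) Einf p q ∧
       SumRel (fun a b => E a b ∧ le a b) Einf q p) ↔
      SumRel (fun a b : X => a = b) Einf p q) ∧
    -- `Δ(X) ∨ E_∞` is a universal countable Borel equivalence relation
    IsUnivCBER (SumRel (fun a b : X => a = b) Einf) := by
  classical
  have hEinfEq := hEinf.1.1
  have hantisymm : ∀ a b : X, le a b → le b a → a = b :=
    fun a b h1 h2 => hle.toIsPartialOrder.toAntisymm.antisymm a b h1 h2
  have htotal : ∀ a b : X, le a b ∨ le b a := fun a b => hle.toTotal.total a b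
  have hlerefl : ∀ a : X, le a a := fun a => hle.toIsPartialOrder.toIsPreorder.toRefl.refl a
  have hantisymm' : ∀ a b : X', le' a b → le' b a → a = b :=
    fun a b h1 h2 => hle'.toIsPartialOrder.toAntisymm.antisymm a b h1 h2
  have htotal' : ∀ a b : X', le' a b ∨ le' b a := fun a b => hle'.toTotal.total a b
  refine ⟨aqo_part1 Z Einf hEinf, ?_, ?_, ?_⟩
  · -- part 2
    intro f hfm hred
    have hinl : ∀ x : X, ∃ x', f (Sum.inl x) = Sum.inl x' := by
      intro x
      obtain ⟨y, hyx, hExy⟩ := hE2 x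
      -- produce a strict pair containing x
      have hstrict : ∃ a b : X, (x = a ∨ x = b) ∧
          SumRel (fun a b => E a b ∧ le a b) Einf (Sum.inl a) (Sum.inl b) ∧
          ¬ SumRel (fun a b => E a b ∧ le a b) Einf (Sum.inl b) (Sum.inl a) := by
        rcases htotal x y with h | h
        · refine ⟨x, y, Or.inl rfl, ⟨hExy, h⟩, ?_⟩
          rintro ⟨-, hba⟩
          exact hyx (hantisymm y x hba h)
        · refine ⟨y, x, Or.inr rfl, ⟨hE.1.symm hExy, h⟩, ?_⟩
          rintro ⟨-, hba⟩
          exact hyx (hantisymm y x h hba)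
      obtain ⟨a, b, hab, h1, h2⟩ := hstrict
      have h1' := (hred _ _).1 h1
      have h2' : ¬ SumRel (fun a b => F a b ∧ le' a b) Einf (f (Sum.inl b)) (f (Sum.inl a)) :=
        fun h => h2 ((hred _ _).2 h)
      have hboth : (∃ a', f (Sum.inl a) = Sum.inl a') ∧ (∃ b', f (Sum.inl b) = Sum.inl b') := by
        rcases hfa : f (Sum.inl a) with a' | z <;> rcases hfb : f (Sum.inl b) with b' | z'
        · exact ⟨⟨a', rfl⟩, ⟨b', rfl⟩⟩
        · rw [hfa, hfb] at h1'; exact absurd h1' (by simp [SumRel])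
        · rw [hfa, hfb] at h1'; exact absurd h1' (by simp [SumRel])
        · rw [hfa, hfb] at h1' h2'
          exact (h2' (hEinfEq.symm h1')).elim
      rcases hab with rfl | rfl
      · exact hboth.1
      · exact hboth.2
    rcases isEmpty_or_nonempty X' with hX' | hX'
    · haveI : IsEmpty X := ⟨fun x => by
        obtain ⟨x', _⟩ := hinl x
        exact hX'.false x'⟩
      exact ⟨fun x => isEmptyElim x, Subsingleton.measurable,
        fun x => isEmptyElim x, fun a => isEmptyElim a, fun a => isEmptyElim a⟩
    · set g : X → X' := fun x => Sum.elim id (fun _ => Classical.arbitrary X') (f (Sum.inl x))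
        with hg
      have hgx : ∀ x : X, f (Sum.inl x) = Sum.inl (g x) := by
        intro x
        obtain ⟨x', hx'⟩ := hinl x
        simp [hg, hx']
      have hgm : Measurable g :=
        (measurable_id.sumElim measurable_const).comp (hfm.comp measurable_inl)
      have hiff1 : ∀ a b : X, (E a b ∧ le a b) ↔ (F (g a) (g b) ∧ le' (g a) (g b)) := by
        intro a b
        have := hred (Sum.inl a) (Sum.inl b)
        rw [hgx a, hgx b] at this
        exact this
      refine ⟨g, hgm, hgx, hiff1, ?_⟩
      intro a b
      constructor
      · intro hab
        rcases htotal a b with h | h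
        · exact ((hiff1 a b).1 ⟨hab, h⟩).1
        · exact hF.1.symm ((hiff1 b a).1 ⟨hE.1.symm hab, h⟩).1
      · intro hab
        rcases htotal' (g a) (g b) with h | h
        · exact ((hiff1 a b).2 ⟨hab, h⟩).1
        · exact hE.1.symm ((hiff1 b a).2 ⟨hF.1.symm hab, h⟩).1
  · -- part 3
    intro p q
    cases p with
    | inl a =>
      cases q with
      | inl b =>
        show (E a b ∧ le a b) ∧ (E b a ∧ le b a) ↔ a = b
        constructor
        · rintro ⟨⟨-, h1⟩, ⟨-, h2⟩⟩
          exact hantisymm a b h1 h2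
        · rintro rfl
          exact ⟨⟨hE.1.refl a, hlerefl a⟩, ⟨hE.1.refl a, hlerefl a⟩⟩
      | inr z => simp [SumRel]
    | inr z =>
      cases q with
      | inl b => simp [SumRel]
      | inr w =>
        show Einf z w ∧ Einf w z ↔ Einf z w
        exact ⟨And.left, fun h => ⟨h, hEinfEq.symm h⟩⟩
  · -- part 4
    constructor
    · refine ⟨⟨fun p => sumRel_refl (fun _ => rfl) hEinfEq.refl p, ?_, ?_⟩, ?_, ?_⟩
      · intro p q h
        cases p <;> cases q <;> simp_all [SumRel]
        · exact hEinfEq.symm h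
      · intro p q r h1 h2
        exact sumRel_trans (R := fun a b : X => a = b) (S := Einf)
          (fun h1 h2 => h1.trans h2) (fun h1 h2 => hEinfEq.trans h1 h2) h1 h2
      · exact aqo_sumRel_measurable (aqo_measurableSet_diag X) hEinf.1.2.1
      · intro p
        cases p with
        | inl a =>
          apply Set.Countable.mono (s₂ := {Sum.inl a}) ?_ (Set.countable_singleton _)
          intro y hy
          cases y with
          | inl b =>
            have : a = b := hy
            simp [this.symm]
          | inr z => exact absurd hy (by simp [SumRel, Set.mem_setOf_eq])
        | inr z =>
          apply Set.Countable.mono (s₂ := Sum.inr '' {w | Einf z w}) ?_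
            (Set.Countable.image (hEinf.1.2.2 z) _)
          intro y hy
          cases y with
          | inl b => exact absurd hy (by simp [SumRel, Set.mem_setOf_eq])
          | inr w => exact ⟨w, hy, rfl⟩
    · intro Y _ _ G hG
      obtain ⟨f₀, hf₀m, hf₀⟩ := hEinf.2 Y G hG
      exact ⟨fun y => Sum.inr (f₀ y), measurable_inr.comp hf₀m, fun a b => hf₀ a b⟩
end
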